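/- arXiv:1709.04523 — 5 statements merged into one kernel-verified Lean document; each statement's English description precedes it below -/
import Mathlib

section
/- Fix g ∈ L¹([0,1]). The map u ↦ (g ∘ u)·u' from the group of orientation-preserving C¹ diffeomorphisms of [0,1] (with the C¹ topology) to L¹([0,1]) is continuous. -/
open MeasureTheory Set

/-- An orientation-preserving `C¹` diffeomorphism of `[0,1]`. -/
def IsDiffeo1 (u : ℝ → ℝ) : Prop :=
  ContDiffOn ℝ 1 u (Icc 0 1) ∧ u 0 = 0 ∧ u 1 = 1 ∧
    ∀ x ∈ Icc (0:ℝ) 1, 0 < derivWithin u (Icc 0 1) x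

lemma IsDiffeo1.hasDeriv {w : ℝ → ℝ} (hw : IsDiffeo1 w) :
    ∀ x ∈ Icc (0:ℝ) 1, HasDerivWithinAt w (derivWithin w (Icc 0 1) x) (Icc 0 1) x :=
  fun x hx => ((hw.1.differentiableOn one_ne_zero) x hx).hasDerivWithinAt

lemma IsDiffeo1.strictMono {w : ℝ → ℝ} (hw : IsDiffeo1 w) :
    StrictMonoOn w (Icc 0 1) := by
  apply strictMonoOn_of_hasDerivWithinAt_pos (convex_Icc (0:ℝ) 1) hw.1.continuousOn
    (f' := derivWithin w (Icc 0 1))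
  · intro x hx
    exact (hw.hasDeriv x (interior_subset hx)).mono interior_subset
  · intro x hx
    exact hw.2.2.2 x (interior_subset hx)

lemma IsDiffeo1.image_eq {w : ℝ → ℝ} (hw : IsDiffeo1 w) :
    w '' (Icc 0 1) = Icc (0:ℝ) 1 := by
  apply Subset.antisymm
  · rintro y ⟨x, hx, rfl⟩
    have h0 : (0:ℝ) ∈ Icc (0:ℝ) 1 := by norm_num
    have h1 : (1:ℝ) ∈ Icc (0:ℝ) 1 := by norm_num
    constructor
    · have := hw.strictMono.monotoneOn h0 hx hx.1
      rwa [hw.2.1] at this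
    · have := hw.strictMono.monotoneOn hx h1 hx.2
      rwa [hw.2.2.1] at this
  · intro y hy
    have := intermediate_value_Icc (zero_le_one) hw.1.continuousOn
    rw [hw.2.1, hw.2.2.1] at this
    exact this hy

lemma IsDiffeo1.deriv_contOn {w : ℝ → ℝ} (hw : IsDiffeo1 w) :
    ContinuousOn (derivWithin w (Icc 0 1)) (Icc (0:ℝ) 1) :=
  hw.1.continuousOn_derivWithin (uniqueDiffOn_Icc zero_lt_one) le_rfl

/-- Change of variables for a diffeo of `[0,1]`. -/
lemma IsDiffeo1.subst_integral {w : ℝ → ℝ} (hw : IsDiffeo1 w) (G : ℝ → ℝ) :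
    ∫ y in Icc (0:ℝ) 1, G y
      = ∫ x in Icc (0:ℝ) 1, |derivWithin w (Icc 0 1) x| * G (w x) := by
  conv_lhs => rw [← hw.image_eq]
  simpa [smul_eq_mul] using
    integral_image_eq_integral_abs_deriv_smul measurableSet_Icc hw.hasDeriv
      hw.strictMono.injOn G

lemma IsDiffeo1.subst_integrable {w : ℝ → ℝ} (hw : IsDiffeo1 w) {G : ℝ → ℝ}
    (hG : IntegrableOn G (Icc 0 1)) :
    IntegrableOn (fun x => |derivWithin w (Icc 0 1) x| * G (w x)) (Icc (0:ℝ) 1) := by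
  have := (integrableOn_image_iff_integrableOn_abs_deriv_smul measurableSet_Icc hw.hasDeriv
      hw.strictMono.injOn G).1
  rw [hw.image_eq] at this
  simpa [smul_eq_mul] using this hG

set_option maxHeartbeats 2000000 in
/-- For fixed `g ∈ L¹([0,1])`, the map `u ↦ (g ∘ u)·u'` from `Diff¹₊([0,1])` with the
`C¹` metric to `L¹([0,1])` is continuous. -/
theorem continuity_of_substitution
    (g : ℝ → ℝ) (hg : IntegrableOn g (Icc 0 1))
    (u : ℝ → ℝ) (hu : IsDiffeo1 u) :
    ∀ ε > 0, ∃ δ > 0, ∀ v : ℝ → ℝ, IsDiffeo1 v →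
      (∀ x ∈ Icc (0:ℝ) 1, |u x - v x| < δ ∧
        |derivWithin u (Icc 0 1) x - derivWithin v (Icc 0 1) x| < δ) →
      (∫ x in Icc (0:ℝ) 1,
        |g (u x) * derivWithin u (Icc 0 1) x - g (v x) * derivWithin v (Icc 0 1) x|) < ε := by
  intro ε hε
  have mI : MeasurableSet (Icc (0:ℝ) 1) := measurableSet_Icc
  have h0I : (0:ℝ) ∈ Icc (0:ℝ) 1 := by norm_num
  -- bound on u'
  obtain ⟨M, hM⟩ := isCompact_Icc.exists_bound_of_continuousOn hu.deriv_contOn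
  have hM0 : 0 ≤ M := le_trans (norm_nonneg _) (hM 0 h0I)
  -- approximate g by a continuous compactly supported h
  have hgi_int : Integrable ((Icc (0:ℝ) 1).indicator g) := (integrable_indicator_iff mI).2 hg
  obtain ⟨h, hsupp, happrox, hcont, hhint⟩ :=
    hgi_int.exists_hasCompactSupport_integral_sub_le (show (0:ℝ) < ε/8 by linarith)
  obtain ⟨x₀, hx₀⟩ := hcont.norm.exists_forall_ge_of_hasCompactSupport hsupp.norm
  set K := ‖h x₀‖ with hK
  have hK0 : 0 ≤ K := norm_nonneg _
  have hUC : UniformContinuous h :=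
    hcont.uniformContinuous_of_tendsto_cocompact hsupp.is_zero_at_infty
  set εp := ε / (8 * (M + 1)) with hεp_def
  have hεp : 0 < εp := by positivity
  obtain ⟨δ₁, hδ₁, hδ₁'⟩ := Metric.uniformContinuous_iff.1 hUC εp hεp
  refine ⟨min δ₁ (min 1 (ε / (8 * (K + 1)))), by positivity, ?_⟩
  intro v hv hclose
  set δ := min δ₁ (min 1 (ε / (8 * (K + 1)))) with hδ_def
  have hδδ₁ : δ ≤ δ₁ := min_le_left _ _
  have hδ1 : δ ≤ 1 := le_trans (min_le_right _ _) (min_le_left _ _)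
  have hδK : δ ≤ ε / (8 * (K + 1)) := le_trans (min_le_right _ _) (min_le_right _ _)
  set u' := derivWithin u (Icc (0:ℝ) 1) with hu'_def
  set v' := derivWithin v (Icc (0:ℝ) 1) with hv'_def
  -- integral of |g-h| on [0,1] is at most ε/8
  have hgh_int : Integrable (fun y => g y - h y) (volume.restrict (Icc (0:ℝ) 1)) :=
    hg.sub (hcont.integrableOn_Icc)
  have hgh_small : ∫ y in Icc (0:ℝ) 1, |g y - h y| ≤ ε / 8 := by
    have hsub : Integrable (fun y => (Icc (0:ℝ) 1).indicator g y - h y) :=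
      hgi_int.sub (hcont.integrable_of_hasCompactSupport hsupp)
    have h1 : ∫ y in Icc (0:ℝ) 1, |g y - h y|
        = ∫ y in Icc (0:ℝ) 1, |(Icc (0:ℝ) 1).indicator g y - h y| := by
      apply setIntegral_congr_fun mI
      intro y hy
      simp only [indicator_of_mem hy]
    have h2 : ∫ y in Icc (0:ℝ) 1, |(Icc (0:ℝ) 1).indicator g y - h y|
        ≤ ∫ y, |(Icc (0:ℝ) 1).indicator g y - h y| :=
      setIntegral_le_integral hsub.abs (Filter.Eventually.of_forall fun y => abs_nonneg _)
    calc ∫ y in Icc (0:ℝ) 1, |g y - h y| ≤ ∫ y, |(Icc (0:ℝ) 1).indicator g y - h y| :=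
          h1 ▸ h2
      _ ≤ ε/8 := by simpa [Real.norm_eq_abs] using happrox
  -- pieces
  set a : ℝ → ℝ := fun x => (g (u x) - h (u x)) * u' x with ha_def
  set b : ℝ → ℝ := fun x => h (u x) * u' x - h (v x) * v' x with hb_def
  set c : ℝ → ℝ := fun x => (h (v x) - g (v x)) * v' x with hc_def
  -- integrability of the pieces
  have key_int : ∀ (w : ℝ → ℝ) (hw : IsDiffeo1 w) (G : ℝ → ℝ),
      IntegrableOn G (Icc (0:ℝ) 1) →
      IntegrableOn (fun x => G (w x) * derivWithin w (Icc 0 1) x) (Icc (0:ℝ) 1) := by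
    intro w hw G hG
    apply (hw.subst_integrable hG).congr_fun _ mI
    intro x hx
    show |derivWithin w (Icc 0 1) x| * G (w x) = G (w x) * derivWithin w (Icc 0 1) x
    rw [abs_of_pos (hw.2.2.2 x hx), mul_comm]
  have int_a : IntegrableOn a (Icc (0:ℝ) 1) :=
    key_int u hu _ (hg.sub hcont.integrableOn_Icc)
  have int_c : IntegrableOn c (Icc (0:ℝ) 1) :=
    key_int v hv _ ((hcont.integrableOn_Icc).sub hg)
  have int_b : IntegrableOn b (Icc (0:ℝ) 1) := by
    apply ContinuousOn.integrableOn_Icc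
    exact ((hcont.comp_continuousOn hu.1.continuousOn).mul hu.deriv_contOn).sub
      ((hcont.comp_continuousOn hv.1.continuousOn).mul hv.deriv_contOn)
  -- the target integrand equals a + b + c
  have hsplit : ∀ x, g (u x) * u' x - g (v x) * v' x = a x + b x + c x := by
    intro x; simp only [ha_def, hb_def, hc_def]; ring
  have int_F : IntegrableOn (fun x => g (u x) * u' x - g (v x) * v' x) (Icc (0:ℝ) 1) := by
    have : IntegrableOn (fun x => a x + b x + c x) (Icc (0:ℝ) 1) := (int_a.add int_b).add int_c
    exact this.congr_fun (fun x _ => (hsplit x).symm) mI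
  -- bound ∫|a|
  have est_a : ∫ x in Icc (0:ℝ) 1, |a x| ≤ ε / 8 := by
    have heq : ∫ x in Icc (0:ℝ) 1, |a x|
        = ∫ x in Icc (0:ℝ) 1, |u' x| * |g (u x) - h (u x)| := by
      apply setIntegral_congr_fun mI
      intro x hx
      show |a x| = |u' x| * |g (u x) - h (u x)|
      rw [ha_def]
      simp only []
      rw [abs_mul, mul_comm, abs_of_pos (hu.2.2.2 x hx)]
    rw [heq, ← hu.subst_integral (fun y => |g y - h y|)]
    exact hgh_small
  have est_c : ∫ x in Icc (0:ℝ) 1, |c x| ≤ ε / 8 := by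
    have heq : ∫ x in Icc (0:ℝ) 1, |c x|
        = ∫ x in Icc (0:ℝ) 1, |v' x| * |g (v x) - h (v x)| := by
      apply setIntegral_congr_fun mI
      intro x hx
      show |c x| = |v' x| * |g (v x) - h (v x)|
      rw [hc_def]
      simp only []
      rw [abs_mul, mul_comm, abs_of_pos (hv.2.2.2 x hx), abs_sub_comm]
    rw [heq, ← hv.subst_integral (fun y => |g y - h y|)]
    exact hgh_small
  -- bound ∫|b|
  have est_b : ∫ x in Icc (0:ℝ) 1, |b x| ≤ ε / 4 := by
    have hbound : ∀ x ∈ Icc (0:ℝ) 1, |b x| ≤ K * δ + εp * (M + 1) := by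
      intro x hx
      obtain ⟨hclose1, hclose2⟩ := hclose x hx
      have hb_eq : b x = h (u x) * (u' x - v' x) + (h (u x) - h (v x)) * v' x := by
        rw [hb_def]; ring
      have h1 : |h (u x)| ≤ K := hx₀ (u x)
      have h2 : |h (u x) - h (v x)| ≤ εp := by
        have : dist (u x) (v x) < δ₁ := lt_of_lt_of_le (by simpa [Real.dist_eq] using hclose1) hδδ₁
        exact le_of_lt (by simpa [Real.dist_eq] using hδ₁' this)
      have h3 : |v' x| ≤ M + 1 := by
        rw [abs_of_pos (hv.2.2.2 x hx)]
        have : v' x ≤ |u' x| + |u' x - v' x| := by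
          have := abs_sub_abs_le_abs_sub (v' x) (u' x)
          have h4 : v' x ≤ |v' x| := le_abs_self _
          rw [abs_sub_comm] at this
          linarith
        have h5 : |u' x| ≤ M := by simpa [Real.norm_eq_abs] using hM x hx
        linarith [le_of_lt hclose2, hδ1]
      calc |b x| ≤ |h (u x)| * |u' x - v' x| + |h (u x) - h (v x)| * |v' x| := by
            rw [hb_eq]
            exact le_trans (abs_add_le _ _) (by rw [abs_mul, abs_mul])
        _ ≤ K * δ + εp * (M + 1) := by
            apply add_le_add
            · exact mul_le_mul h1 (le_of_lt hclose2) (abs_nonneg _) hK0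
            · exact mul_le_mul h2 h3 (abs_nonneg _) (le_of_lt hεp)
    have hvol : (volume (Icc (0:ℝ) 1)).toReal = 1 := by simp
    have := norm_setIntegral_le_of_norm_le_const (C := K * δ + εp * (M + 1))
      (f := fun x => |b x|) (s := Icc (0:ℝ) 1) (μ := volume) (by rw [Real.volume_Icc]; norm_num)
      (fun x hx => by simpa [Real.norm_eq_abs, abs_abs] using hbound x hx)
    change _ ≤ _ * (volume (Icc (0:ℝ) 1)).toReal at this
    rw [hvol, mul_one] at this
    have hle : ∫ x in Icc (0:ℝ) 1, |b x| ≤ K * δ + εp * (M + 1) :=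
      le_trans (le_abs_self _) this
    have hKδ : K * δ ≤ ε / 8 := by
      calc K * δ ≤ K * (ε / (8 * (K + 1))) :=
            mul_le_mul_of_nonneg_left hδK hK0
        _ ≤ ε / 8 := by
            rw [← mul_div_assoc, div_le_div_iff₀ (by positivity) (by norm_num : (0:ℝ) < 8)]
            nlinarith [hK0, hε.le]
    have hεpM : εp * (M + 1) = ε / 8 := by
      rw [hεp_def]; field_simp
    linarith
  -- combine
  have htri : ∫ x in Icc (0:ℝ) 1, |g (u x) * u' x - g (v x) * v' x|
      ≤ ∫ x in Icc (0:ℝ) 1, (|a x| + |b x| + |c x|) := by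
    apply setIntegral_mono_on int_F.abs ((int_a.abs.add int_b.abs).add int_c.abs) mI
    intro x hx
    rw [hsplit x]
    exact abs_add_three _ _ _
  have hadd : ∫ x in Icc (0:ℝ) 1, (|a x| + |b x| + |c x|)
      = (∫ x in Icc (0:ℝ) 1, |a x|) + (∫ x in Icc (0:ℝ) 1, |b x|)
        + (∫ x in Icc (0:ℝ) 1, |c x|) := by
    have iab : Integrable (fun x => |a x| + |b x|) (volume.restrict (Icc (0:ℝ) 1)) :=
      int_a.abs.add int_b.abs
    rw [integral_add iab int_c.abs, integral_add int_a.abs int_b.abs]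
  calc ∫ x in Icc (0:ℝ) 1, |g (u x) * u' x - g (v x) * v' x|
      ≤ (∫ x in Icc (0:ℝ) 1, |a x|) + (∫ x in Icc (0:ℝ) 1, |b x|)
        + (∫ x in Icc (0:ℝ) 1, |c x|) := hadd ▸ htri
    _ ≤ ε/8 + ε/4 + ε/8 := by gcongr
    _ < ε := by linarith
end

section
/- Let (fₙ) be a sequence of orientation-preserving C¹ diffeomorphisms of [0,1] and f₀ a C¹ diffeomorphism with fₙ → f₀ and fₙ' → f₀' uniformly. Then for every ε > 0 there exists δ > 0 such that: whenever E ⊆ [0,1] is a Borel set with λ(E) < δ and (f_{n_i}) is any subsequence, there is a further subsequence (f_{n_{i_ℓ}}) with λ(f₀(E) ∪ ⋃_{ℓ≥1} f_{n_{i_ℓ}}(E)) < ε. -/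
open MeasureTheory Set Filter Topology Metric

lemma aux_image_le {u : ℝ → ℝ} {s : Set ℝ} {d : ℝ → ℝ} {M : ℝ} (hs : MeasurableSet s)
    (hd : ∀ x ∈ s, HasDerivWithinAt u (d x) s x) (hb : ∀ x ∈ s, |d x| ≤ M) :
    volume (u '' s) ≤ ENNReal.ofReal M * volume s := by
  calc volume (u '' s) ≤ ∫⁻ x in s, ENNReal.ofReal |d x| ∂volume := by
        simpa [ContinuousLinearMap.det_toSpanSingleton] using
          addHaar_image_le_lintegral_abs_det_fderiv volume hs
            (fun x hx => (hd x hx).hasFDerivWithinAt)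
    _ ≤ ∫⁻ _ in s, ENNReal.ofReal M ∂volume :=
        setLIntegral_mono' hs (fun x hx => ENNReal.ofReal_le_ofReal (hb x hx))
    _ = ENNReal.ofReal M * volume s := by rw [setLIntegral_const]

lemma IsDiffeo1.hasD {u : ℝ → ℝ} (hu : IsDiffeo1 u) :
    ∀ x ∈ Icc (0:ℝ) 1, HasDerivWithinAt u (derivWithin u (Icc 0 1) x) (Icc 0 1) x :=
  fun x hx => ((hu.1.differentiableOn one_ne_zero) x hx).hasDerivWithinAt

lemma IsDiffeo1.growth {u : ℝ → ℝ} (hu : IsDiffeo1 u) {C : ℝ}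
    (hC : ∀ x ∈ Icc (0:ℝ) 1, C ≤ derivWithin u (Icc 0 1) x) :
    ∀ x ∈ Icc (0:ℝ) 1, ∀ y ∈ Icc (0:ℝ) 1, x ≤ y → C * (y - x) ≤ u y - u x := by
  have := (convex_Icc (0:ℝ) 1).mul_sub_le_image_sub_of_le_deriv hu.1.continuousOn
    ((hu.1.differentiableOn one_ne_zero).mono interior_subset) (C := C) ?_
  · exact this
  · intro x hx
    rw [interior_Icc] at hx
    rw [← derivWithin_of_mem_nhds (Icc_mem_nhds hx.1 hx.2)]
    exact hC x (Ioo_subset_Icc_self hx)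

lemma IsDiffeo1.mapsTo {u : ℝ → ℝ} (hu : IsDiffeo1 u) :
    MapsTo u (Icc 0 1) (Icc (0:ℝ) 1) := by
  intro x hx
  have h := hu.growth (C := 0) (fun x hx => (hu.2.2.2 x hx).le)
  have h1 := h 0 (by simp) x hx hx.1
  have h2 := h x hx 1 (by simp) hx.2
  rw [hu.2.1] at h1; rw [hu.2.2.1] at h2
  constructor <;> nlinarith

/-- Solecki's lemma. -/
theorem solecki_lemma
    (f : ℕ → ℝ → ℝ) (f₀ : ℝ → ℝ)
    (hf : ∀ n, IsDiffeo1 (f n)) (hf₀ : IsDiffeo1 f₀)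
    (hconv : TendstoUniformlyOn (fun n x => f n x) f₀ atTop (Icc 0 1))
    (hconv' : TendstoUniformlyOn (fun n x => derivWithin (f n) (Icc 0 1) x)
      (derivWithin f₀ (Icc 0 1)) atTop (Icc 0 1)) :
    ∀ ε > (0:ℝ), ∃ δ > (0:ℝ), ∀ E : Set ℝ, MeasurableSet E → E ⊆ Icc 0 1 →
      volume E < ENNReal.ofReal δ →
      ∀ n : ℕ → ℕ, StrictMono n → ∃ φ : ℕ → ℕ, StrictMono φ ∧
        volume (f₀ '' E ∪ ⋃ ℓ : ℕ, f (n (φ ℓ)) '' E) < ENNReal.ofReal ε := by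
  intro ε hε
  have hUD : UniqueDiffOn ℝ (Icc (0:ℝ) 1) := uniqueDiffOn_Icc one_pos
  have hc₀ : ContinuousOn (derivWithin f₀ (Icc 0 1)) (Icc 0 1) :=
    hf₀.1.continuousOn_derivWithin hUD le_rfl
  -- upper bound M on derivatives
  obtain ⟨xM, hxM, hMx⟩ := isCompact_Icc.exists_isMaxOn (nonempty_Icc.2 zero_le_one) hc₀
  set M : ℝ := max (derivWithin f₀ (Icc 0 1) xM) 0 + 1 with hMdef
  have hM1 : (1:ℝ) ≤ M := by
    have := le_max_right (derivWithin f₀ (Icc 0 1) xM) 0; simp only [hMdef]; linarith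
  have hM0 : (0:ℝ) < M := lt_of_lt_of_le one_pos hM1
  have hf₀b : ∀ x ∈ Icc (0:ℝ) 1, |derivWithin f₀ (Icc 0 1) x| ≤ M := by
    intro x hx
    rw [abs_of_pos (hf₀.2.2.2 x hx)]
    have h1 := hMx hx
    have h2 := le_max_left (derivWithin f₀ (Icc 0 1) xM) 0
    simp only [hMdef]; linarith [h1.out]
  -- lower bound m on derivative of f₀
  obtain ⟨xm, hxm, hmx⟩ := isCompact_Icc.exists_isMinOn (nonempty_Icc.2 zero_le_one) hc₀
  set m : ℝ := derivWithin f₀ (Icc 0 1) xm with hmdef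
  have hm0 : 0 < m := hf₀.2.2.2 xm hxm
  have hmle : ∀ x ∈ Icc (0:ℝ) 1, m ≤ derivWithin f₀ (Icc 0 1) x := fun x hx => hmx hx
  -- eventual bound on derivatives of f n
  obtain ⟨N, hN⟩ : ∃ N, ∀ k ≥ N, ∀ x ∈ Icc (0:ℝ) 1,
      dist (derivWithin f₀ (Icc 0 1) x) (derivWithin (f k) (Icc 0 1) x) < 1 :=
    eventually_atTop.1 (Metric.tendstoUniformlyOn_iff.1 hconv' 1 one_pos)
  have hfnb : ∀ k ≥ N, ∀ x ∈ Icc (0:ℝ) 1, |derivWithin (f k) (Icc 0 1) x| ≤ M := by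
    intro k hk x hx
    rw [abs_of_pos ((hf k).2.2.2 x hx)]
    have h1 := hN k hk x hx
    rw [Real.dist_eq] at h1
    have h2 := hMx hx
    have h3 := le_max_left (derivWithin f₀ (Icc 0 1) xM) 0
    have := abs_lt.1 h1
    simp only [hMdef]; linarith [h2.out]
  -- choose δ
  refine ⟨ε / (4 * M), by positivity, ?_⟩
  intro E hEmeas hEsub hEvol n hn
  -- open set U' ⊇ E
  obtain ⟨U, hEU, hUopen, hUvol⟩ := Set.exists_isOpen_lt_of_lt E _ hEvol
  set U' : Set ℝ := U ∩ Ioo (-1) 2 with hU'def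
  have hU'open : IsOpen U' := hUopen.inter isOpen_Ioo
  have hEU' : E ⊆ U' := fun x hx => ⟨hEU hx, by
    have := hEsub hx; constructor <;> [linarith [this.1]; linarith [this.2]]⟩
  have hU'vol : volume U' < ENNReal.ofReal (ε / (4 * M)) :=
    lt_of_le_of_lt (measure_mono inter_subset_left) hUvol
  set S : Set ℝ := f₀ '' (U' ∩ Icc 0 1) with hSdef
  have hU'Imeas : MeasurableSet (U' ∩ Icc 0 1) := hU'open.measurableSet.inter measurableSet_Icc
  have hSvol : volume S ≤ ENNReal.ofReal M * ENNReal.ofReal (ε / (4 * M)) := by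
    refine le_trans (aux_image_le hU'Imeas
      (fun x hx => (hf₀.hasD x hx.2).mono inter_subset_right)
      (fun x hx => hf₀b x hx.2)) ?_
    exact mul_le_mul_right (le_trans (measure_mono inter_subset_left) hU'vol.le) _
  -- the shrinking sets A j
  set A : ℕ → Set ℝ := fun j => E ∩ {x | infDist x U'ᶜ ≤ 1 / (j + 1)} with hAdef
  have hAmeas : ∀ j, MeasurableSet (A j) := fun j =>
    hEmeas.inter (isClosed_le (continuous_infDist_pt _) continuous_const).measurableSet
  have hAanti : Antitone A := by
    intro j j' hjj'
    refine inter_subset_inter_right _ (fun x hx => ?_)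
    have hj1 : (j:ℝ) + 1 ≤ (j':ℝ) + 1 := by exact_mod_cast Nat.succ_le_succ hjj'
    exact le_trans hx (one_div_le_one_div_of_le (by positivity) hj1)
  have hAsub : ∀ j, A j ⊆ Icc (0:ℝ) 1 := fun j => inter_subset_left.trans hEsub
  have hAempty : ⋂ j, A j = ∅ := by
    rw [eq_empty_iff_forall_notMem]
    intro x hx
    simp only [mem_iInter] at hx
    have hxE : x ∈ E := (hx 0).1
    have hinf : infDist x U'ᶜ ≤ 0 := by
      refine ge_of_tendsto' tendsto_one_div_add_atTop_nhds_zero_nat (fun j => ?_)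
      exact (hx j).2
    have hne : U'ᶜ.Nonempty := ⟨2, fun h => by simp [hU'def] at h⟩
    have hxU' : x ∈ U'ᶜ := (hU'open.isClosed_compl.mem_iff_infDist_zero hne).2
      (le_antisymm hinf infDist_nonneg)
    exact hxU' (hEU' hxE)
  have hAlim : Tendsto (volume ∘ A) atTop (𝓝 0) := by
    have := tendsto_measure_iInter_atTop (μ := volume)
      (fun j => (hAmeas j).nullMeasurableSet) hAanti
      ⟨0, ne_of_lt (lt_of_le_of_lt (measure_mono inter_subset_left) (hEvol.trans_le le_top))⟩
    rwa [hAempty, measure_empty] at this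
  -- key claim
  have hkey : ∀ c : ENNReal, c ≠ 0 → ∀ᶠ k in atTop, volume (f k '' E \ S) < c := by
    intro c hc
    have hMne0 : ENNReal.ofReal M ≠ 0 := by
      simp [ENNReal.ofReal_eq_zero, not_le, hM0]
    obtain ⟨j, hj⟩ : ∃ j, volume (A j) < c / ENNReal.ofReal M :=
      (hAlim.eventually (gt_mem_nhds (ENNReal.div_pos hc ENNReal.ofReal_ne_top))).exists
    have hmul : ENNReal.ofReal M * volume (A j) < c := ENNReal.mul_lt_of_lt_div' hj
    set η : ℝ := 1 / (j + 1) with hηdef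
    have hη : 0 < η := by positivity
    filter_upwards [eventually_ge_atTop N, Metric.tendstoUniformlyOn_iff.1 hconv (m * η) (by positivity)] with k hkN hkdist
    have hsub : f k '' E \ S ⊆ f k '' A j := by
      rintro z ⟨⟨x, hxE, rfl⟩, hzS⟩
      refine ⟨x, ⟨hxE, ?_⟩, rfl⟩
      by_contra hd
      rw [mem_setOf_eq, not_le] at hd
      apply hzS
      have hxI : x ∈ Icc (0:ℝ) 1 := hEsub hxE
      have hz : f k x ∈ Icc (0:ℝ) 1 := (hf k).mapsTo hxI
      have hsurj : Icc (0:ℝ) 1 ⊆ f₀ '' Icc 0 1 := by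
        have := intermediate_value_Icc zero_le_one hf₀.1.continuousOn
        rwa [hf₀.2.1, hf₀.2.2.1] at this
      obtain ⟨y, hyI, hy⟩ := hsurj hz
      have growth := hf₀.growth (C := m) hmle
      have h1 : m * |y - x| ≤ |f₀ y - f₀ x| := by
        rcases le_total x y with h | h
        · rw [abs_of_nonneg (by linarith), abs_of_nonneg
            (by nlinarith [growth x hxI y hyI h, mul_nonneg hm0.le (sub_nonneg.2 h)] :
              (0:ℝ) ≤ f₀ y - f₀ x)]
          exact growth x hxI y hyI h
        · rw [abs_of_nonpos (by linarith), abs_of_nonpos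
            (by nlinarith [growth y hyI x hxI h, mul_nonneg hm0.le (sub_nonneg.2 h)] :
              f₀ y - f₀ x ≤ 0)]
          have := growth y hyI x hxI h; linarith
      have h2 : |f₀ y - f₀ x| < m * η := by
        have := hkdist x hxI
        rw [Real.dist_eq] at this
        rw [hy, abs_sub_comm]
        exact this
      have hyx : |y - x| < η := lt_of_mul_lt_mul_left (lt_of_le_of_lt h1 h2) hm0.le
      have hyU : y ∈ U' := by
        by_contra hyU
        have h3 : infDist x U'ᶜ ≤ dist x y := infDist_le_dist_of_mem hyU
        rw [Real.dist_eq, abs_sub_comm] at h3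
        linarith
      exact ⟨y, ⟨hyU, hyI⟩, hy⟩
    calc volume (f k '' E \ S) ≤ volume (f k '' A j) := measure_mono hsub
      _ ≤ ENNReal.ofReal M * volume (A j) :=
          aux_image_le (hAmeas j)
            (fun x hx => ((hf k).hasD x (hAsub j hx)).mono (hAsub j))
            (fun x hx => hfnb k hkN x (hAsub j hx))
      _ < c := hmul
  -- extract subsequence
  have hev : ∀ ℓ : ℕ, ∀ᶠ k in atTop,
      volume (f (n k) '' E \ S) < ENNReal.ofReal (ε / 4) * 2⁻¹ ^ ℓ := by
    intro ℓ
    refine hn.tendsto_atTop.eventually (hkey _ ?_)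
    apply mul_ne_zero
    · simp [ENNReal.ofReal_eq_zero, not_le]; positivity
    · exact pow_ne_zero _ (ENNReal.inv_ne_zero.2 (by norm_num))
  obtain ⟨φ, hφ, hφP⟩ := Filter.extraction_forall_of_eventually hev
  refine ⟨φ, hφ, ?_⟩
  have hf₀S : f₀ '' E ⊆ S := image_mono (subset_inter hEU' hEsub)
  have hincl : f₀ '' E ∪ ⋃ ℓ : ℕ, f (n (φ ℓ)) '' E ⊆
      S ∪ ⋃ ℓ : ℕ, (f (n (φ ℓ)) '' E \ S) := by
    rintro z (hz | hz)
    · exact Or.inl (hf₀S hz)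
    · obtain ⟨ℓ, hℓ⟩ := mem_iUnion.1 hz
      by_cases hzS : z ∈ S
      · exact Or.inl hzS
      · exact Or.inr (mem_iUnion.2 ⟨ℓ, hℓ, hzS⟩)
  have htsum : ∑' ℓ : ℕ, ENNReal.ofReal (ε / 4) * 2⁻¹ ^ ℓ = ENNReal.ofReal (ε / 2) := by
    rw [ENNReal.tsum_mul_left, ENNReal.tsum_geometric]
    rw [ENNReal.one_sub_inv_two, inv_inv]
    rw [show (2:ENNReal) = ENNReal.ofReal 2 by simp]
    rw [← ENNReal.ofReal_mul (by positivity)]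
    congr 1
    ring
  calc volume (f₀ '' E ∪ ⋃ ℓ : ℕ, f (n (φ ℓ)) '' E)
      ≤ volume (S ∪ ⋃ ℓ : ℕ, (f (n (φ ℓ)) '' E \ S)) := measure_mono hincl
    _ ≤ volume S + volume (⋃ ℓ : ℕ, (f (n (φ ℓ)) '' E \ S)) := measure_union_le _ _
    _ ≤ volume S + ∑' ℓ : ℕ, volume (f (n (φ ℓ)) '' E \ S) :=
        add_le_add_right (measure_iUnion_le _) _
    _ ≤ ENNReal.ofReal M * ENNReal.ofReal (ε / (4 * M))
        + ∑' ℓ : ℕ, ENNReal.ofReal (ε / 4) * 2⁻¹ ^ ℓ :=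
        add_le_add hSvol (ENNReal.tsum_le_tsum (fun ℓ => (hφP ℓ).le))
    _ = ENNReal.ofReal (ε / 4) + ENNReal.ofReal (ε / 2) := by
        rw [htsum, ← ENNReal.ofReal_mul hM0.le]
        congr 2
        field_simp
    _ < ENNReal.ofReal ε := by
        rw [← ENNReal.ofReal_add (by positivity) (by positivity)]
        exact ENNReal.ofReal_lt_ofReal_iff hε |>.2 (by linarith)
end

section
/- Let (fₙ) be a sequence of orientation-preserving C¹ diffeomorphisms of [0,1] with absolutely continuous derivatives, and f₀ likewise, such that fₙ → f₀, fₙ' → f₀' uniformly and fₙ'' → f₀'' in L¹([0,1]). Then [(fₙ')⁻¹ · fₙ''] ∘ fₙ⁻¹ → [(f₀')⁻¹ · f₀''] ∘ f₀⁻¹ in L¹([0,1]). -/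
open MeasureTheory Set Filter Topology intervalIntegral

lemma diffeo_facts {u : ℝ → ℝ} (hu : IsDiffeo1 u) :
    (∀ x ∈ Icc (0:ℝ) 1, HasDerivWithinAt u (derivWithin u (Icc 0 1) x) (Icc 0 1) x) ∧
    ContinuousOn (derivWithin u (Icc 0 1)) (Icc 0 1) ∧
    InjOn u (Icc 0 1) ∧ u '' (Icc 0 1) = Icc 0 1 := by
  obtain ⟨hsm, h0, h1, hpos⟩ := hu
  have hUD : UniqueDiffOn ℝ (Icc (0:ℝ) 1) := uniqueDiffOn_Icc zero_lt_one
  have hd : DifferentiableOn ℝ u (Icc 0 1) := hsm.differentiableOn one_ne_zero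
  have hder : ∀ x ∈ Icc (0:ℝ) 1, HasDerivWithinAt u (derivWithin u (Icc 0 1) x) (Icc 0 1) x :=
    fun x hx => (hd x hx).hasDerivWithinAt
  have hcont' : ContinuousOn (derivWithin u (Icc 0 1)) (Icc 0 1) :=
    hsm.continuousOn_derivWithin hUD le_rfl
  have hmono : StrictMonoOn u (Icc 0 1) :=
    strictMonoOn_of_hasDerivWithinAt_pos (convex_Icc 0 1) hsm.continuousOn
      (fun x hx => (hder x (interior_subset hx)).mono interior_subset)
      (fun x hx => hpos x (interior_subset hx))
  have himg : u '' (Icc 0 1) = Icc 0 1 := by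
    apply Subset.antisymm
    · rintro y ⟨x, hx, rfl⟩
      have h0m : (0:ℝ) ∈ Icc (0:ℝ) 1 := left_mem_Icc.2 zero_le_one
      have h1m : (1:ℝ) ∈ Icc (0:ℝ) 1 := right_mem_Icc.2 zero_le_one
      constructor
      · calc (0:ℝ) = u 0 := h0.symm
          _ ≤ u x := hmono.monotoneOn h0m hx hx.1
      · calc u x ≤ u 1 := hmono.monotoneOn hx h1m hx.2
          _ = 1 := h1
    · intro y hy
      have h2 := intermediate_value_Icc zero_le_one hsm.continuousOn
      rw [h0, h1] at h2
      exact h2 hy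
  exact ⟨hder, hcont', hmono.injOn, himg⟩

/-- If `fₙ → f₀`, `fₙ' → f₀'` uniformly and `fₙ'' → f₀''` in `L¹` (where `fₙ''` is the
a.e. derivative of the absolutely continuous `fₙ'`), then
`[(fₙ')⁻¹·fₙ''] ∘ fₙ⁻¹ → [(f₀')⁻¹·f₀''] ∘ f₀⁻¹` in `L¹([0,1])`. -/
theorem key_claim_L1_convergence
    (f : ℕ → ℝ → ℝ) (f₀ : ℝ → ℝ) (finv : ℕ → ℝ → ℝ) (f₀inv : ℝ → ℝ)
    (hf : ∀ n, IsDiffeo1 (f n)) (hf₀ : IsDiffeo1 f₀)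
    (hinv : ∀ n, ∀ x ∈ Icc (0:ℝ) 1, finv n (f n x) = x ∧ f n (finv n x) = x)
    (hinv₀ : ∀ x ∈ Icc (0:ℝ) 1, f₀inv (f₀ x) = x ∧ f₀ (f₀inv x) = x)
    (f'' : ℕ → ℝ → ℝ) (f₀'' : ℝ → ℝ)
    (hint : ∀ n, IntegrableOn (f'' n) (Icc 0 1)) (hint₀ : IntegrableOn f₀'' (Icc 0 1))
    (hac : ∀ n, ∀ x ∈ Icc (0:ℝ) 1, derivWithin (f n) (Icc 0 1) x
      = derivWithin (f n) (Icc 0 1) 0 + ∫ t in (0:ℝ)..x, f'' n t)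
    (hac₀ : ∀ x ∈ Icc (0:ℝ) 1, derivWithin f₀ (Icc 0 1) x
      = derivWithin f₀ (Icc 0 1) 0 + ∫ t in (0:ℝ)..x, f₀'' t)
    (hconv : TendstoUniformlyOn (fun n x => f n x) f₀ atTop (Icc 0 1))
    (hconv' : TendstoUniformlyOn (fun n x => derivWithin (f n) (Icc 0 1) x)
      (derivWithin f₀ (Icc 0 1)) atTop (Icc 0 1))
    (hL1 : Tendsto (fun n => ∫ x in Icc (0:ℝ) 1, |f'' n x - f₀'' x|) atTop (𝓝 0)) :
    Tendsto (fun n => ∫ x in Icc (0:ℝ) 1,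
      |(derivWithin (f n) (Icc 0 1) (finv n x))⁻¹ * f'' n (finv n x)
        - (derivWithin f₀ (Icc 0 1) (f₀inv x))⁻¹ * f₀'' (f₀inv x)|) atTop (𝓝 0) := by
  have hSmeas : MeasurableSet (Icc (0:ℝ) 1) := measurableSet_Icc
  have hSfin : volume (Icc (0:ℝ) 1) < ⊤ := by
    rw [Real.volume_Icc]; exact ENNReal.ofReal_lt_top
  obtain ⟨hder₀, hcont₀', hinj₀, himg₀⟩ := diffeo_facts hf₀
  set D₀ : ℝ → ℝ := derivWithin f₀ (Icc 0 1) with hD₀def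
  -- inverse maps stay in the interval
  have hfinvS : ∀ n, ∀ x ∈ Icc (0:ℝ) 1, finv n x ∈ Icc (0:ℝ) 1 := by
    intro n x hx
    rw [← (diffeo_facts (hf n)).2.2.2] at hx
    obtain ⟨y, hy, rfl⟩ := hx
    rw [(hinv n y hy).1]; exact hy
  have hfinv₀S : ∀ x ∈ Icc (0:ℝ) 1, f₀inv x ∈ Icc (0:ℝ) 1 := by
    intro x hx
    rw [← himg₀] at hx
    obtain ⟨y, hy, rfl⟩ := hx
    rw [(hinv₀ y hy).1]; exact hy
  -- change of variables
  have hCoV : ∀ (u : ℝ → ℝ),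
      (∀ x ∈ Icc (0:ℝ) 1, HasDerivWithinAt u (derivWithin u (Icc 0 1) x) (Icc 0 1) x) →
      InjOn u (Icc 0 1) → u '' (Icc 0 1) = Icc 0 1 → ∀ G : ℝ → ℝ,
      ∫ x in Icc (0:ℝ) 1, G x
        = ∫ y in Icc (0:ℝ) 1, |derivWithin u (Icc 0 1) y| * G (u y) := by
    intro u h1 h2 h3 G
    conv_lhs => rw [← h3]
    rw [integral_image_eq_integral_abs_deriv_smul hSmeas h1 h2 G]
    simp [smul_eq_mul]
  have hCoVInt : ∀ (u : ℝ → ℝ),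
      (∀ x ∈ Icc (0:ℝ) 1, HasDerivWithinAt u (derivWithin u (Icc 0 1) x) (Icc 0 1) x) →
      InjOn u (Icc 0 1) → u '' (Icc 0 1) = Icc 0 1 → ∀ G : ℝ → ℝ,
      IntegrableOn G (Icc 0 1)
        ↔ IntegrableOn (fun y => |derivWithin u (Icc 0 1) y| * G (u y)) (Icc 0 1) := by
    intro u h1 h2 h3 G
    conv_lhs => rw [← h3]
    have := integrableOn_image_iff_integrableOn_abs_deriv_smul hSmeas h1 h2 G
    simpa [smul_eq_mul] using this
  -- lower bound δ and upper bound C for D₀ on the interval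
  obtain ⟨x₀, hx₀S, hx₀min⟩ := isCompact_Icc.exists_isMinOn
    (nonempty_Icc.2 zero_le_one) hcont₀'
  obtain ⟨x₁, hx₁S, hx₁max⟩ := isCompact_Icc.exists_isMaxOn
    (nonempty_Icc.2 zero_le_one) hcont₀'
  set δ : ℝ := D₀ x₀ with hδdef
  have hδpos : 0 < δ := hf₀.2.2.2 x₀ hx₀S
  have hδle : ∀ x ∈ Icc (0:ℝ) 1, δ ≤ D₀ x := fun x hx => hx₀min hx
  set M : ℝ := D₀ x₁ + 1 with hMdef
  have hMpos : 0 < M := by have := hδle x₁ hx₁S; linarith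
  have hCM : ∀ x ∈ Icc (0:ℝ) 1, D₀ x ≤ M - 1 := by
    intro x hx
    have h := hx₁max hx
    simp only [mem_setOf_eq] at h
    simp only [hMdef]; linarith
  -- integrability of h₀
  set h₀ : ℝ → ℝ := fun y => (D₀ y)⁻¹ * f₀'' y with hh₀def
  have hinvD₀cont : ContinuousOn (fun y => (D₀ y)⁻¹) (Icc 0 1) :=
    hcont₀'.inv₀ (fun x hx => (hf₀.2.2.2 x hx).ne')
  have h₀int : IntegrableOn h₀ (Icc 0 1) := by
    apply Integrable.bdd_mul (c := δ⁻¹) hint₀ (hinvD₀cont.aestronglyMeasurable hSmeas)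
    refine (ae_restrict_iff' hSmeas).2 (ae_of_all _ fun x hx => ?_)
    rw [Real.norm_eq_abs, abs_of_pos (inv_pos.2 (hf₀.2.2.2 x hx))]
    exact inv_anti₀ hδpos (hδle x hx)
  -- MVT-type lower bound for f₀
  have hMVT : ∀ a ∈ Icc (0:ℝ) 1, ∀ b ∈ Icc (0:ℝ) 1, δ * |a - b| ≤ |f₀ a - f₀ b| := by
    have hmo : MonotoneOn (fun x => f₀ x - δ * x) (Icc 0 1) := by
      apply monotoneOn_of_hasDerivWithinAt_nonneg (f' := fun x => D₀ x - δ * 1)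
        (convex_Icc 0 1)
        (hf₀.1.continuousOn.sub ((continuous_const.mul continuous_id).continuousOn))
        (fun x hx => ((hder₀ x (interior_subset hx)).mono interior_subset).sub
          (((hasDerivAt_id x).const_mul δ).hasDerivWithinAt))
      intro x hx
      have := hδle x (interior_subset hx)
      simp only [mul_one]; linarith
    have key : ∀ a ∈ Icc (0:ℝ) 1, ∀ b ∈ Icc (0:ℝ) 1, a ≤ b →
        δ * (b - a) ≤ f₀ b - f₀ a := by
      intro a ha b hb hab
      have := hmo ha hb hab
      simp only at this
      nlinarith
    intro a ha b hb
    rcases le_total a b with hab | hab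
    · have h1 := key a ha b hb hab
      rw [abs_of_nonpos (by linarith), abs_of_nonpos (by nlinarith : f₀ a - f₀ b ≤ 0)]
      nlinarith
    · have h1 := key b hb a ha hab
      rw [abs_of_nonneg (by linarith), abs_of_nonneg (by nlinarith : (0:ℝ) ≤ f₀ a - f₀ b)]
      nlinarith
  -- pass to ε-N form
  rw [NormedAddCommGroup.tendsto_nhds_zero]
  intro ε hε
  set ε' : ℝ := ε / (2 * M + 4) with hε'def
  have hε'pos : 0 < ε' := div_pos hε (by linarith)
  -- density: approximate h₀ by a continuous function
  set H : ℝ → ℝ := (Icc (0:ℝ) 1).indicator h₀ with hHdef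
  have Hint : Integrable H := (integrable_indicator_iff hSmeas).2 h₀int
  obtain ⟨g, gsupp, hgapprox, gcont, gint⟩ :=
    Hint.exists_hasCompactSupport_integral_sub_le hε'pos
  have gUC : UniformContinuous g := gsupp.uniformContinuous_of_continuous gcont
  obtain ⟨δg, hδgpos, hδg⟩ := Metric.uniformContinuous_iff.1 gUC ε' hε'pos
  have gSint : IntegrableOn g (Icc (0:ℝ) 1) := gcont.integrableOn_Icc
  have h₀gint : IntegrableOn (fun y => |h₀ y - g y|) (Icc 0 1) := (h₀int.sub gSint).abs
  have hg2 : (∫ y in Icc (0:ℝ) 1, |h₀ y - g y|) ≤ ε' := by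
    have heq : EqOn (fun y => |h₀ y - g y|) (fun y => ‖H y - g y‖) (Icc (0:ℝ) 1) := by
      intro y hy
      simp only [hHdef, indicator_of_mem hy, Real.norm_eq_abs]
    rw [setIntegral_congr_fun hSmeas heq]
    calc (∫ y in Icc (0:ℝ) 1, ‖H y - g y‖) ≤ ∫ y, ‖H y - g y‖ :=
          setIntegral_le_integral (Hint.sub gint).norm (ae_of_all _ fun y => norm_nonneg _)
      _ ≤ ε' := hgapprox
  set K : ℝ := ∫ y in Icc (0:ℝ) 1, |f₀'' y| with hKdef
  have hKnonneg : 0 ≤ K := integral_nonneg fun y => abs_nonneg _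
  set ε₁ : ℝ := min 1 (δ * (ε' / (K + 1))) with hε₁def
  have hε₁pos : 0 < ε₁ := lt_min one_pos (by positivity)
  have E1 := Metric.tendstoUniformlyOn_iff.1 hconv' ε₁ hε₁pos
  have E2 := Metric.tendstoUniformlyOn_iff.1 hconv (δ * δg) (by positivity)
  have E3 := hL1.eventually_lt_const hε'pos
  filter_upwards [E1, E2, E3] with n h1 h2 h3
  obtain ⟨hdern, hcontn', hinjn, himgn⟩ := diffeo_facts (hf n)
  set Dn : ℝ → ℝ := derivWithin (f n) (Icc 0 1) with hDndef
  set hn : ℝ → ℝ := fun y => (Dn y)⁻¹ * f'' n y with hhndef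
  have hDnpos : ∀ x ∈ Icc (0:ℝ) 1, 0 < Dn x := (hf n).2.2.2
  have hDnM : ∀ x ∈ Icc (0:ℝ) 1, Dn x ≤ M := by
    intro x hx
    have hd := h1 x hx
    rw [Real.dist_eq] at hd
    have h2' := (abs_lt.1 hd).1
    have h3' : ε₁ ≤ 1 := min_le_left _ _
    have h4' := hCM x hx
    linarith
  -- closeness of the inverse functions
  have hinvclose : ∀ x ∈ Icc (0:ℝ) 1, |finv n x - f₀inv x| < δg := by
    intro x hx
    have ha := hfinvS n x hx
    have hb := hfinv₀S x hx
    have hkey := hMVT _ ha _ hb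
    have e1 : f₀ (f₀inv x) = x := (hinv₀ x hx).2
    have e2 : f n (finv n x) = x := (hinv n x hx).2
    have e4 : dist (f₀ (finv n x)) (f n (finv n x)) < δ * δg := h2 _ ha
    rw [Real.dist_eq] at e4
    have hlt : δ * |finv n x - f₀inv x| < δ * δg := by
      calc δ * |finv n x - f₀inv x| ≤ |f₀ (finv n x) - f₀ (f₀inv x)| := hkey
        _ = |f₀ (finv n x) - f n (finv n x)| := by rw [e1, e2]
        _ < δ * δg := e4
    exact (mul_lt_mul_iff_right₀ hδpos).1 hlt
  -- rewrite the goal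
  rw [Real.norm_eq_abs, abs_of_nonneg (integral_nonneg fun x => abs_nonneg _)]
  show (∫ x in Icc (0:ℝ) 1, |hn (finv n x) - h₀ (f₀inv x)|) < ε
  -- integrability facts
  have prodInt : IntegrableOn (fun y => Dn y * h₀ y) (Icc 0 1) := by
    have base : IntegrableOn (fun y => (Dn y * (D₀ y)⁻¹) * f₀'' y) (Icc 0 1) := by
      apply Integrable.bdd_mul (c := M * δ⁻¹) hint₀
        ((hcontn'.mul hinvD₀cont).aestronglyMeasurable hSmeas)
      refine (ae_restrict_iff' hSmeas).2 (ae_of_all _ fun x hx => ?_)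
      rw [Real.norm_eq_abs, Pi.mul_apply, abs_mul, abs_of_pos (hDnpos x hx),
        abs_of_pos (inv_pos.2 (hf₀.2.2.2 x hx))]
      exact mul_le_mul (hDnM x hx) (inv_anti₀ hδpos (hδle x hx))
        (inv_pos.2 (hf₀.2.2.2 x hx)).le hMpos.le
    apply base.congr_fun ?_ hSmeas
    intro y hy
    simp only [hh₀def]
    ring
  have EAfun_int : IntegrableOn (fun y => |f'' n y - Dn y * h₀ y|) (Icc 0 1) :=
    ((hint n).sub prodInt).abs
  have I1 : IntegrableOn (fun x => |hn (finv n x) - h₀ (finv n x)|) (Icc 0 1) := by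
    rw [hCoVInt (f n) hdern hinjn himgn, ← hDndef]
    apply EAfun_int.congr_fun ?_ hSmeas
    intro y hy
    have e := (hinv n y hy).1
    have hp := hDnpos y hy
    show |f'' n y - Dn y * h₀ y| = |Dn y| * |hn (finv n (f n y)) - h₀ (finv n (f n y))|
    rw [e, ← abs_mul]
    congr 1
    simp only [hhndef]
    field_simp
  have I2 : IntegrableOn (fun x => |h₀ (finv n x) - g (finv n x)|) (Icc 0 1) := by
    rw [hCoVInt (f n) hdern hinjn himgn, ← hDndef]
    have base : IntegrableOn (fun y => |Dn y| * |h₀ y - g y|) (Icc 0 1) := by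
      apply Integrable.bdd_mul (c := M) h₀gint (hcontn'.abs.aestronglyMeasurable hSmeas)
      refine (ae_restrict_iff' hSmeas).2 (ae_of_all _ fun x hx => ?_)
      rw [Real.norm_eq_abs, abs_abs, abs_of_pos (hDnpos x hx)]
      exact hDnM x hx
    apply base.congr_fun ?_ hSmeas
    intro y hy
    show |Dn y| * |h₀ y - g y| = |Dn y| * |h₀ (finv n (f n y)) - g (finv n (f n y))|
    rw [(hinv n y hy).1]
  have I4 : IntegrableOn (fun x => |g (f₀inv x) - h₀ (f₀inv x)|) (Icc 0 1) := by
    rw [hCoVInt f₀ hder₀ hinj₀ himg₀, ← hD₀def]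
    have base : IntegrableOn (fun y => |D₀ y| * |g y - h₀ y|) (Icc 0 1) := by
      apply Integrable.bdd_mul (c := M) (gSint.sub h₀int).abs
        (hcont₀'.abs.aestronglyMeasurable hSmeas)
      refine (ae_restrict_iff' hSmeas).2 (ae_of_all _ fun x hx => ?_)
      rw [Real.norm_eq_abs, abs_abs, abs_of_pos (hf₀.2.2.2 x hx)]
      linarith [hCM x hx]
    apply base.congr_fun ?_ hSmeas
    intro y hy
    show |D₀ y| * |g y - h₀ y| = |D₀ y| * |g (f₀inv (f₀ y)) - h₀ (f₀inv (f₀ y))|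
    rw [(hinv₀ y hy).1]
  have constInt : IntegrableOn (fun _ => ε') (Icc (0:ℝ) 1) :=
    integrableOn_const hSfin.ne
  -- pointwise triangle inequality
  have step1 : (∫ x in Icc (0:ℝ) 1, |hn (finv n x) - h₀ (f₀inv x)|)
      ≤ ∫ x in Icc (0:ℝ) 1, (|hn (finv n x) - h₀ (finv n x)|
          + |h₀ (finv n x) - g (finv n x)| + ε' + |g (f₀inv x) - h₀ (f₀inv x)|) := by
    apply integral_mono_of_nonneg (ae_of_all _ fun x => abs_nonneg _)
      (((I1.add I2).add constInt).add I4)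
    refine (ae_restrict_iff' hSmeas).2 (ae_of_all _ fun x hx => ?_)
    have habc : |g (finv n x) - g (f₀inv x)| ≤ ε' := by
      have hd : dist (finv n x) (f₀inv x) < δg := by
        rw [Real.dist_eq]; exact hinvclose x hx
      have := hδg hd
      rw [Real.dist_eq] at this
      exact this.le
    have t1 := abs_sub_le (hn (finv n x)) (h₀ (finv n x)) (h₀ (f₀inv x))
    have t2 := abs_sub_le (h₀ (finv n x)) (g (finv n x)) (h₀ (f₀inv x))
    have t3 := abs_sub_le (g (finv n x)) (g (f₀inv x)) (h₀ (f₀inv x))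
    simp only [Pi.add_apply]
    linarith
  have hconstint : (∫ _x in Icc (0:ℝ) 1, ε') = ε' := by
    rw [setIntegral_const]
    simp [Real.volume_Icc]
  have split : (∫ x in Icc (0:ℝ) 1, (|hn (finv n x) - h₀ (finv n x)|
          + |h₀ (finv n x) - g (finv n x)| + ε' + |g (f₀inv x) - h₀ (f₀inv x)|))
      = (∫ x in Icc (0:ℝ) 1, |hn (finv n x) - h₀ (finv n x)|)
        + (∫ x in Icc (0:ℝ) 1, |h₀ (finv n x) - g (finv n x)|) + ε'
        + ∫ x in Icc (0:ℝ) 1, |g (f₀inv x) - h₀ (f₀inv x)| := by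
    have e1 : (∫ x in Icc (0:ℝ) 1, (|hn (finv n x) - h₀ (finv n x)|
          + |h₀ (finv n x) - g (finv n x)| + ε' + |g (f₀inv x) - h₀ (f₀inv x)|))
        = (∫ x in Icc (0:ℝ) 1, (|hn (finv n x) - h₀ (finv n x)|
          + |h₀ (finv n x) - g (finv n x)| + ε'))
          + ∫ x in Icc (0:ℝ) 1, |g (f₀inv x) - h₀ (f₀inv x)| :=
      MeasureTheory.integral_add ((I1.add I2).add constInt) I4
    have e2 : (∫ x in Icc (0:ℝ) 1, (|hn (finv n x) - h₀ (finv n x)|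
          + |h₀ (finv n x) - g (finv n x)| + ε'))
        = (∫ x in Icc (0:ℝ) 1, (|hn (finv n x) - h₀ (finv n x)|
          + |h₀ (finv n x) - g (finv n x)|)) + ∫ _x in Icc (0:ℝ) 1, ε' :=
      MeasureTheory.integral_add (I1.add I2) constInt
    have e3 : (∫ x in Icc (0:ℝ) 1, (|hn (finv n x) - h₀ (finv n x)|
          + |h₀ (finv n x) - g (finv n x)|))
        = (∫ x in Icc (0:ℝ) 1, |hn (finv n x) - h₀ (finv n x)|)
          + ∫ x in Icc (0:ℝ) 1, |h₀ (finv n x) - g (finv n x)| :=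
      MeasureTheory.integral_add I1 I2
    rw [e1, e2, e3, hconstint]
  -- term EA
  have EA : (∫ x in Icc (0:ℝ) 1, |hn (finv n x) - h₀ (finv n x)|)
      = ∫ y in Icc (0:ℝ) 1, |f'' n y - Dn y * h₀ y| := by
    rw [hCoV (f n) hdern hinjn himgn, ← hDndef]
    apply setIntegral_congr_fun hSmeas
    intro y hy
    have e := (hinv n y hy).1
    have hp := hDnpos y hy
    show |Dn y| * |hn (finv n (f n y)) - h₀ (finv n (f n y))| = |f'' n y - Dn y * h₀ y|
    rw [e, ← abs_mul]
    congr 1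
    simp only [hhndef]
    field_simp
  have hT2int : IntegrableOn (fun y => |f₀'' y - Dn y * h₀ y|) (Icc 0 1) :=
    (hint₀.sub prodInt).abs
  have EAbound : (∫ y in Icc (0:ℝ) 1, |f'' n y - Dn y * h₀ y|) ≤ ε' + ε' := by
    have tri : (∫ y in Icc (0:ℝ) 1, |f'' n y - Dn y * h₀ y|)
        ≤ ∫ y in Icc (0:ℝ) 1, (|f'' n y - f₀'' y| + |f₀'' y - Dn y * h₀ y|) := by
      apply integral_mono_of_nonneg (ae_of_all _ fun y => abs_nonneg _)
        ((((hint n).sub hint₀).abs).add hT2int)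
      exact ae_of_all _ fun y => abs_sub_le _ _ _
    have t2 : (∫ y in Icc (0:ℝ) 1, |f₀'' y - Dn y * h₀ y|) ≤ ε' := by
      have pt : ∀ y ∈ Icc (0:ℝ) 1, |f₀'' y - Dn y * h₀ y| ≤ (ε' / (K + 1)) * |f₀'' y| := by
        intro y hy
        have hd := h1 y hy
        rw [Real.dist_eq] at hd
        have hδy := hδle y hy
        have hpos₀ : 0 < D₀ y := hf₀.2.2.2 y hy
        have e : f₀'' y - Dn y * h₀ y = ((D₀ y - Dn y) / D₀ y) * f₀'' y := by
          simp only [hh₀def]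
          field_simp
        rw [e, abs_mul]
        apply mul_le_mul_of_nonneg_right ?_ (abs_nonneg _)
        rw [abs_div, abs_of_pos hpos₀]
        calc |D₀ y - Dn y| / D₀ y ≤ ε₁ / δ :=
              div_le_div₀ (by positivity) hd.le hδpos hδy
          _ ≤ ε' / (K + 1) := by
              rw [div_le_iff₀ hδpos]
              calc ε₁ ≤ δ * (ε' / (K + 1)) := min_le_right _ _
                _ = ε' / (K + 1) * δ := by ring
      calc (∫ y in Icc (0:ℝ) 1, |f₀'' y - Dn y * h₀ y|)
          ≤ ∫ y in Icc (0:ℝ) 1, (ε' / (K + 1)) * |f₀'' y| := by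
            apply integral_mono_of_nonneg (ae_of_all _ fun y => abs_nonneg _)
              (hint₀.abs.const_mul _)
            exact (ae_restrict_iff' hSmeas).2 (ae_of_all _ pt)
        _ = (ε' / (K + 1)) * K := by rw [MeasureTheory.integral_const_mul, ← hKdef]
        _ ≤ ε' := by
            rw [div_mul_eq_mul_div, div_le_iff₀ (by positivity : (0:ℝ) < K + 1)]
            nlinarith
    have hsplit2 : (∫ y in Icc (0:ℝ) 1, (|f'' n y - f₀'' y| + |f₀'' y - Dn y * h₀ y|))
        = (∫ y in Icc (0:ℝ) 1, |f'' n y - f₀'' y|)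
          + ∫ y in Icc (0:ℝ) 1, |f₀'' y - Dn y * h₀ y| :=
      MeasureTheory.integral_add (((hint n).sub hint₀).abs) hT2int
    have h3' : (∫ y in Icc (0:ℝ) 1, |f'' n y - f₀'' y|) < ε' := h3
    linarith
  -- term EB
  have EB : (∫ x in Icc (0:ℝ) 1, |h₀ (finv n x) - g (finv n x)|) ≤ M * ε' := by
    rw [hCoV (f n) hdern hinjn himgn, ← hDndef]
    have step : (∫ y in Icc (0:ℝ) 1, |Dn y| * |h₀ (finv n (f n y)) - g (finv n (f n y))|)
        ≤ ∫ y in Icc (0:ℝ) 1, M * |h₀ y - g y| := by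
      apply integral_mono_of_nonneg
        (ae_of_all _ fun y => mul_nonneg (abs_nonneg _) (abs_nonneg _))
        (h₀gint.const_mul M)
      refine (ae_restrict_iff' hSmeas).2 (ae_of_all _ fun y hy => ?_)
      dsimp only
      rw [(hinv n y hy).1, abs_of_pos (hDnpos y hy)]
      exact mul_le_mul_of_nonneg_right (hDnM y hy) (abs_nonneg _)
    calc (∫ y in Icc (0:ℝ) 1, |Dn y| * |h₀ (finv n (f n y)) - g (finv n (f n y))|)
        ≤ ∫ y in Icc (0:ℝ) 1, M * |h₀ y - g y| := step
      _ = M * ∫ y in Icc (0:ℝ) 1, |h₀ y - g y| := MeasureTheory.integral_const_mul _ _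
      _ ≤ M * ε' := mul_le_mul_of_nonneg_left hg2 hMpos.le
  -- term ED
  have ED : (∫ x in Icc (0:ℝ) 1, |g (f₀inv x) - h₀ (f₀inv x)|) ≤ M * ε' := by
    rw [hCoV f₀ hder₀ hinj₀ himg₀, ← hD₀def]
    have step : (∫ y in Icc (0:ℝ) 1, |D₀ y| * |g (f₀inv (f₀ y)) - h₀ (f₀inv (f₀ y))|)
        ≤ ∫ y in Icc (0:ℝ) 1, M * |h₀ y - g y| := by
      apply integral_mono_of_nonneg
        (ae_of_all _ fun y => mul_nonneg (abs_nonneg _) (abs_nonneg _))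
        (h₀gint.const_mul M)
      refine (ae_restrict_iff' hSmeas).2 (ae_of_all _ fun y hy => ?_)
      dsimp only
      rw [(hinv₀ y hy).1, abs_of_pos (hf₀.2.2.2 y hy), abs_sub_comm]
      exact mul_le_mul (by linarith [hCM y hy]) le_rfl (abs_nonneg _) hMpos.le
    calc (∫ y in Icc (0:ℝ) 1, |D₀ y| * |g (f₀inv (f₀ y)) - h₀ (f₀inv (f₀ y))|)
        ≤ ∫ y in Icc (0:ℝ) 1, M * |h₀ y - g y| := step
      _ = M * ∫ y in Icc (0:ℝ) 1, |h₀ y - g y| := MeasureTheory.integral_const_mul _ _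
      _ ≤ M * ε' := mul_le_mul_of_nonneg_left hg2 hMpos.le
  -- assemble
  have total : (∫ x in Icc (0:ℝ) 1, |hn (finv n x) - h₀ (f₀inv x)|)
      ≤ (ε' + ε') + M * ε' + ε' + M * ε' := by
    have hs := split
    rw [EA] at hs
    have := step1
    rw [hs] at this
    linarith [EAbound, EB, ED]
  have hfin : (2 * M + 4) * ε' = ε := by
    rw [hε'def]
    field_simp
  linarith
end

section
/- If a sequence (fₙ) of orientation-preserving C^k diffeomorphisms of [0,1] with absolutely continuous k-th derivatives converges to f₀ in the sense that d_{C^k}(fₙ,f₀) → 0 and fₙ^{(k+1)} → f₀^{(k+1)} in L¹, then for any fixed g in the same class, (fₙ ∘ g)^{(k+1)} → (f₀ ∘ g)^{(k+1)} in L¹; i.e., right multiplication by g is continuous. -/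
open MeasureTheory Set Filter Topology intervalIntegral

noncomputable section

/-- An orientation-preserving `C^k` diffeomorphism of `[0,1]` whose `k`-th derivative
is absolutely continuous. -/
structure DiffkAC (k : ℕ) where
  toFun : ℝ → ℝ
  contDiff : ContDiffOn ℝ k toFun (Icc 0 1)
  map0 : toFun 0 = 0
  map1 : toFun 1 = 1
  derivPos : ∀ x ∈ Icc (0:ℝ) 1, 0 < derivWithin toFun (Icc 0 1) x
  ac : ∃ h : ℝ → ℝ, IntegrableOn h (Icc 0 1) ∧ ∀ x ∈ Icc (0:ℝ) 1,
    iteratedDerivWithin k toFun (Icc 0 1) x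
      = iteratedDerivWithin k toFun (Icc 0 1) 0 + ∫ t in (0:ℝ)..x, h t

/-- A choice of the a.e. `(k+1)`-st derivative of `f` (unique up to a.e. equality). -/
def DiffkAC.acDeriv {k : ℕ} (f : DiffkAC k) : ℝ → ℝ := f.ac.choose

/-- The `C^k` distance `d_{C^k}(f,g) = sup|f−g| + Σ_{i=1}^k sup|f^{(i)}−g^{(i)}|`. -/
def dCk (k : ℕ) (f g : DiffkAC k) : ℝ :=
  (⨆ x : Icc (0:ℝ) 1, |f.toFun x - g.toFun x|) +
    ∑ i ∈ Finset.Icc 1 k, ⨆ x : Icc (0:ℝ) 1,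
      |iteratedDerivWithin i f.toFun (Icc 0 1) x - iteratedDerivWithin i g.toFun (Icc 0 1) x|

/-- The metric `d(f,g) = d_{C^k}(f,g) + ∫₀¹ |f^{(k+1)} − g^{(k+1)}|`. -/
def dAC (k : ℕ) (f g : DiffkAC k) : ℝ :=
  dCk k f g + ∫ x in Icc (0:ℝ) 1, |f.acDeriv x - g.acDeriv x|

local notation "I01" => Icc (0:ℝ) 1

namespace RMC
open ENNReal NNReal

lemma evar_le_of (f : ℝ → ℝ) (s : Set ℝ) (C : ℝ≥0∞)
    (h : ∀ (n : ℕ) (w : ℕ → ℝ), Monotone w → (∀ i, w i ∈ s) →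
      ∑ i ∈ Finset.range n, edist (f (w (i+1))) (f (w i)) ≤ C) :
    eVariationOn f s ≤ C := by
  unfold eVariationOn
  exact iSup_le fun p => h p.1 p.2.1 p.2.2.1 p.2.2.2

lemma evar_const_add (C : ℝ) (f : ℝ → ℝ) (s : Set ℝ) :
    eVariationOn (fun x => C + f x) s = eVariationOn f s := by
  unfold eVariationOn
  congr 1 with p
  congr 1 with i
  simp [edist_dist, Real.dist_eq]

lemma evar_add_le (u v : ℝ → ℝ) (s : Set ℝ) :
    eVariationOn (fun x => u x + v x) s ≤ eVariationOn u s + eVariationOn v s := by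
  apply evar_le_of
  intro n w hw ws
  calc ∑ i ∈ Finset.range n, edist (u (w (i+1)) + v (w (i+1))) (u (w i) + v (w i))
      ≤ ∑ i ∈ Finset.range n,
          (edist (u (w (i+1))) (u (w i)) + edist (v (w (i+1))) (v (w i))) := by
        refine Finset.sum_le_sum fun i _ => ?_
        simp only [edist_dist]
        rw [← ENNReal.ofReal_add dist_nonneg dist_nonneg]
        exact ENNReal.ofReal_le_ofReal (dist_add_add_le _ _ _ _)
    _ = _ := Finset.sum_add_distrib
    _ ≤ _ := add_le_add (eVariationOn.sum_le (f := u) (n := n) hw ws) (eVariationOn.sum_le (f := v) (n := n) hw ws)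

lemma evar_mul_le (u v : ℝ → ℝ) (s : Set ℝ) (A B : ℝ)
    (hu : ∀ x ∈ s, |u x| ≤ A) (hv : ∀ x ∈ s, |v x| ≤ B) :
    eVariationOn (fun x => u x * v x) s ≤
      ENNReal.ofReal A * eVariationOn v s + ENNReal.ofReal B * eVariationOn u s := by
  apply evar_le_of
  intro n w hw ws
  have hA : 0 ≤ A := le_trans (abs_nonneg _) (hu _ (ws 0))
  have hB : 0 ≤ B := le_trans (abs_nonneg _) (hv _ (ws 0))
  calc ∑ i ∈ Finset.range n, edist (u (w (i+1)) * v (w (i+1))) (u (w i) * v (w i))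
      ≤ ∑ i ∈ Finset.range n,
          (ENNReal.ofReal A * edist (v (w (i+1))) (v (w i)) +
           ENNReal.ofReal B * edist (u (w (i+1))) (u (w i))) := by
        refine Finset.sum_le_sum fun i _ => ?_
        simp only [edist_dist, Real.dist_eq]
        rw [← ENNReal.ofReal_mul hA, ← ENNReal.ofReal_mul hB,
          ← ENNReal.ofReal_add (by positivity) (by positivity)]
        apply ENNReal.ofReal_le_ofReal
        have : u (w (i+1)) * v (w (i+1)) - u (w i) * v (w i)
            = u (w (i+1)) * (v (w (i+1)) - v (w i)) + v (w i) * (u (w (i+1)) - u (w i)) := by ring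
        rw [this]
        calc |_ + _| ≤ |u (w (i+1)) * (v (w (i+1)) - v (w i))|
              + |v (w i) * (u (w (i+1)) - u (w i))| := abs_add_le _ _
          _ ≤ A * |v (w (i+1)) - v (w i)| + B * |u (w (i+1)) - u (w i)| := by
              rw [abs_mul, abs_mul]
              exact add_le_add (mul_le_mul_of_nonneg_right (hu _ (ws (i+1))) (abs_nonneg _))
                (mul_le_mul_of_nonneg_right (hv _ (ws i)) (abs_nonneg _))
    _ = ENNReal.ofReal A * ∑ i ∈ Finset.range n, edist (v (w (i+1))) (v (w i)) +
        ENNReal.ofReal B * ∑ i ∈ Finset.range n, edist (u (w (i+1))) (u (w i)) := by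
        rw [Finset.sum_add_distrib, Finset.mul_sum, Finset.mul_sum]
    _ ≤ _ := add_le_add
        (mul_le_mul_right (eVariationOn.sum_le (f := v) (n := n) hw ws) _)
        (mul_le_mul_right (eVariationOn.sum_le (f := u) (n := n) hw ws) _)

lemma intervalIntegrable_of_integrableOn {h : ℝ → ℝ} (hi : IntegrableOn h (Icc (0:ℝ) 1))
    {a b : ℝ} (ha : a ∈ Icc (0:ℝ) 1) (hb : b ∈ Icc (0:ℝ) 1) :
    IntervalIntegrable h volume a b := by
  rw [intervalIntegrable_iff]
  refine hi.mono_set ((Set.uIoc_subset_uIcc).trans ?_)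
  exact Set.uIcc_subset_Icc ha hb

lemma evar_primitive_le {h : ℝ → ℝ} (hi : IntegrableOn h (Icc (0:ℝ) 1)) :
    eVariationOn (fun x => ∫ t in (0:ℝ)..x, h t) (Icc (0:ℝ) 1)
      ≤ ENNReal.ofReal (∫ x in Icc (0:ℝ) 1, |h x|) := by
  apply evar_le_of
  intro n w hw ws
  have h0 : (0:ℝ) ∈ Icc (0:ℝ) 1 := by constructor <;> norm_num
  have key : ∀ i, (∫ t in (0:ℝ)..w (i+1), h t) - (∫ t in (0:ℝ)..w i, h t)
      = ∫ t in w i..w (i+1), h t := fun i =>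
    intervalIntegral.integral_interval_sub_left
      (intervalIntegrable_of_integrableOn hi h0 (ws (i+1)))
      (intervalIntegrable_of_integrableOn hi h0 (ws i))
  have habs : IntegrableOn (fun x => |h x|) (Icc (0:ℝ) 1) := hi.abs
  calc ∑ i ∈ Finset.range n, edist ((fun x => ∫ t in (0:ℝ)..x, h t) (w (i+1)))
        ((fun x => ∫ t in (0:ℝ)..x, h t) (w i))
      = ∑ i ∈ Finset.range n, ENNReal.ofReal |∫ t in w i..w (i+1), h t| := by
        refine Finset.sum_congr rfl fun i _ => ?_
        rw [edist_dist, Real.dist_eq, key i]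
    _ ≤ ∑ i ∈ Finset.range n, ENNReal.ofReal (∫ t in w i..w (i+1), |h t|) := by
        refine Finset.sum_le_sum fun i _ => ENNReal.ofReal_le_ofReal ?_
        exact intervalIntegral.abs_integral_le_integral_abs (hw (Nat.le_succ i))
    _ = ENNReal.ofReal (∑ i ∈ Finset.range n, ∫ t in w i..w (i+1), |h t|) := by
        rw [ENNReal.ofReal_sum_of_nonneg]
        intro i _
        exact intervalIntegral.integral_nonneg (hw (Nat.le_succ i)) (fun x _ => abs_nonneg _)
    _ = ENNReal.ofReal (∫ t in (w 0)..(w n), |h t|) := by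
        congr 1
        exact intervalIntegral.sum_integral_adjacent_intervals fun i _ =>
          intervalIntegrable_of_integrableOn habs (ws i) (ws (i+1))
    _ ≤ ENNReal.ofReal (∫ x in Icc (0:ℝ) 1, |h x|) := by
        apply ENNReal.ofReal_le_ofReal
        rw [intervalIntegral.integral_of_le (hw (Nat.zero_le n))]
        refine setIntegral_mono_set habs ?_ ?_
        · exact Eventually.of_forall fun x => abs_nonneg _
        · exact HasSubset.Subset.eventuallyLE (Set.Ioc_subset_Icc_self.trans
            (Set.Icc_subset_Icc (ws 0).1 (ws n).2))


lemma integral_abs_le_evar_primitive_add (φ : ℝ → ℝ) (hφ : Continuous φ) {ε : ℝ} (hε : 0 < ε) :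
    ENNReal.ofReal (∫ x in Icc (0:ℝ) 1, |φ x|) ≤
      eVariationOn (fun x => ∫ t in (0:ℝ)..x, φ t) (Icc (0:ℝ) 1) + ENNReal.ofReal (2*ε) := by
  have huc : UniformContinuousOn φ (Icc (0:ℝ) 1) :=
    isCompact_Icc.uniformContinuousOn_of_continuous hφ.continuousOn
  rw [Metric.uniformContinuousOn_iff] at huc
  obtain ⟨δ, hδpos, hδ⟩ := huc ε hε
  obtain ⟨m, hm⟩ := exists_nat_one_div_lt hδpos
  set N : ℕ := m + 1 with hNdef
  have hN : (0:ℝ) < N := by positivity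
  have h1N : 1 / (N:ℝ) < δ := by exact_mod_cast hm
  set a : ℕ → ℝ := fun i => (i:ℝ) / N with ha
  have haN : ∀ i, i ≤ N → a i ∈ Icc (0:ℝ) 1 := by
    intro i hi
    constructor
    · positivity
    · rw [div_le_one hN]; exact_mod_cast hi
  have hamono : Monotone a := fun i j hij => by
    apply div_le_div_of_nonneg_right ?_ hN.le
    · exact_mod_cast hij
  set u : ℕ → ℝ := fun i => min (a i) 1 with hu
  have humono : Monotone u := fun i j hij => min_le_min (hamono hij) le_rfl
  have humem : ∀ i, u i ∈ Icc (0:ℝ) 1 :=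
    fun i => ⟨le_min (by positivity) zero_le_one, min_le_right _ _⟩
  have hua : ∀ i, i ≤ N → u i = a i := fun i hi => min_eq_left (haN i hi).2
  set Φ : ℝ → ℝ := fun x => ∫ t in (0:ℝ)..x, φ t with hΦ
  have hlen : ∀ i : ℕ, a (i+1) - a i = 1 / N := by
    intro i; rw [ha]; push_cast; field_simp; ring
  have hab : ∀ i : ℕ, a i ≤ a (i+1) := fun i => hamono (Nat.le_succ i)
  have key1 : ∀ i : ℕ, Φ (a (i+1)) - Φ (a i) = ∫ t in a i..a (i+1), φ t := fun i =>
    intervalIntegral.integral_interval_sub_left (hφ.intervalIntegrable _ _)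
      (hφ.intervalIntegrable _ _)
  have piece : ∀ i : ℕ, i < N →
      (∫ t in a i..a (i+1), |φ t|) ≤ |Φ (a (i+1)) - Φ (a i)| + 2*ε/N := by
    intro i hi
    set c := φ (a i) with hc
    have hsub : Icc (a i) (a (i+1)) ⊆ Icc (0:ℝ) 1 :=
      Icc_subset_Icc (haN i hi.le).1 (haN (i+1) hi).2
    have hclose : ∀ t ∈ Icc (a i) (a (i+1)), |φ t - c| ≤ ε := by
      intro t ht
      have h1 : dist t (a i) < δ := by
        rw [Real.dist_eq, abs_of_nonneg (sub_nonneg.2 ht.1)]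
        calc t - a i ≤ a (i+1) - a i := by linarith [ht.2]
          _ = 1 / N := hlen i
          _ < δ := h1N
      have := hδ t (hsub ht) (a i) (haN i hi.le) h1
      rw [Real.dist_eq] at this
      exact this.le
    have b1 : (∫ t in a i..a (i+1), |φ t|) ≤ (1/N) * (|c| + ε) := by
      calc (∫ t in a i..a (i+1), |φ t|)
          ≤ ∫ _t in a i..a (i+1), (|c| + ε) := by
            apply intervalIntegral.integral_mono_on (hab i)
              (hφ.abs.intervalIntegrable _ _) intervalIntegrable_const
            intro t ht
            calc |φ t| = |c + (φ t - c)| := by ring_nf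
              _ ≤ |c| + |φ t - c| := abs_add_le _ _
              _ ≤ |c| + ε := by linarith [hclose t ht]
        _ = (1/N) * (|c| + ε) := by
            rw [intervalIntegral.integral_const, hlen i, smul_eq_mul]
    have b2 : |(∫ t in a i..a (i+1), φ t) - (1/N) * c| ≤ ε/N := by
      have hsplit : (∫ t in a i..a (i+1), φ t) - (1/N) * c
          = ∫ t in a i..a (i+1), (φ t - c) := by
        rw [intervalIntegral.integral_sub (hφ.intervalIntegrable _ _)
          intervalIntegrable_const, intervalIntegral.integral_const, hlen i, smul_eq_mul]
      rw [hsplit]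
      calc |∫ t in a i..a (i+1), (φ t - c)| ≤ ∫ t in a i..a (i+1), |φ t - c| :=
            intervalIntegral.abs_integral_le_integral_abs (hab i)
        _ ≤ ∫ _t in a i..a (i+1), ε := by
            apply intervalIntegral.integral_mono_on (hab i)
              ((hφ.sub continuous_const).abs.intervalIntegrable _ _) intervalIntegrable_const
            exact hclose
        _ = ε/N := by rw [intervalIntegral.integral_const, hlen i, smul_eq_mul]; ring
    have b3 : (1/N) * |c| ≤ |Φ (a (i+1)) - Φ (a i)| + ε/N := by
      rw [key1 i]
      calc (1/N) * |c| = |(1/N) * c| := by rw [abs_mul, abs_of_pos (by positivity : (0:ℝ) < 1/(N:ℝ))]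
        _ ≤ |∫ t in a i..a (i+1), φ t| + |(∫ t in a i..a (i+1), φ t) - (1/N) * c| := by
            have := abs_sub_abs_le_abs_sub ((1:ℝ)/N * c) (∫ t in a i..a (i+1), φ t)
            rw [abs_sub_comm] at this
            linarith [this]
        _ ≤ _ + ε/N := by linarith [b2]
    calc (∫ t in a i..a (i+1), |φ t|) ≤ (1/N) * (|c| + ε) := b1
      _ = (1/N) * |c| + ε/N := by ring
      _ ≤ |Φ (a (i+1)) - Φ (a i)| + ε/N + ε/N := by linarith [b3]
      _ = |Φ (a (i+1)) - Φ (a i)| + 2*ε/N := by ring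
  have hsum : (∫ x in Icc (0:ℝ) 1, |φ x|)
      ≤ (∑ i ∈ Finset.range N, |Φ (a (i+1)) - Φ (a i)|) + 2*ε := by
    have e1 : (∫ x in Icc (0:ℝ) 1, |φ x|) = ∫ t in (a 0)..(a N), |φ t| := by
      have h0 : a 0 = 0 := by simp [ha]
      have h1 : a N = 1 := by rw [ha]; field_simp
      rw [h0, h1, intervalIntegral.integral_of_le zero_le_one,
        integral_Icc_eq_integral_Ioc]
    have e2 : (∫ t in (a 0)..(a N), |φ t|) = ∑ i ∈ Finset.range N, ∫ t in a i..a (i+1), |φ t| :=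
      (intervalIntegral.sum_integral_adjacent_intervals fun i _ =>
        hφ.abs.intervalIntegrable _ _).symm
    rw [e1, e2]
    calc (∑ i ∈ Finset.range N, ∫ t in a i..a (i+1), |φ t|)
        ≤ ∑ i ∈ Finset.range N, (|Φ (a (i+1)) - Φ (a i)| + 2*ε/N) :=
          Finset.sum_le_sum fun i hi => piece i (Finset.mem_range.mp hi)
      _ = (∑ i ∈ Finset.range N, |Φ (a (i+1)) - Φ (a i)|) + N * (2*ε/N) := by
          rw [Finset.sum_add_distrib, Finset.sum_const, Finset.card_range, nsmul_eq_mul]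
      _ = (∑ i ∈ Finset.range N, |Φ (a (i+1)) - Φ (a i)|) + 2*ε := by
          field_simp
  calc ENNReal.ofReal (∫ x in Icc (0:ℝ) 1, |φ x|)
      ≤ ENNReal.ofReal ((∑ i ∈ Finset.range N, |Φ (a (i+1)) - Φ (a i)|) + 2*ε) :=
        ENNReal.ofReal_le_ofReal hsum
    _ = ENNReal.ofReal (∑ i ∈ Finset.range N, |Φ (a (i+1)) - Φ (a i)|) + ENNReal.ofReal (2*ε) := by
        rw [ENNReal.ofReal_add (Finset.sum_nonneg fun i _ => abs_nonneg _) (by positivity)]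
    _ ≤ eVariationOn Φ (Icc (0:ℝ) 1) + ENNReal.ofReal (2*ε) := by
        gcongr
        rw [ENNReal.ofReal_sum_of_nonneg (fun i _ => abs_nonneg _)]
        have : ∀ i ∈ Finset.range N, ENNReal.ofReal |Φ (a (i+1)) - Φ (a i)|
            = edist (Φ (u (i+1))) (Φ (u i)) := by
          intro i hi
          rw [Finset.mem_range] at hi
          rw [hua i hi.le, hua (i+1) hi, edist_dist, Real.dist_eq]
        rw [Finset.sum_congr rfl this]
        exact eVariationOn.sum_le (f := Φ) (n := N) humono humem


lemma ofReal_integral_abs_le_evar {h : ℝ → ℝ} (hi : IntegrableOn h (Icc (0:ℝ) 1)) :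
    ENNReal.ofReal (∫ x in Icc (0:ℝ) 1, |h x|) ≤
      eVariationOn (fun x => ∫ t in (0:ℝ)..x, h t) (Icc (0:ℝ) 1) := by
  apply ENNReal.le_of_forall_pos_le_add
  intro ε hε _
  have hε6 : (0:ℝ) < ε/6 := by positivity
  set h' : ℝ → ℝ := (Icc (0:ℝ) 1).indicator h with hh'
  have hh'int : Integrable h' := (integrable_indicator_iff measurableSet_Icc).2 hi
  obtain ⟨φ, hφsupp, hφnear, hφcont, hφint⟩ :=
    hh'int.exists_hasCompactSupport_integral_sub_le hε6
  -- ∫_I |h' - φ| ≤ ε/6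
  have hIsub : (∫ x in Icc (0:ℝ) 1, |h' x - φ x|) ≤ ε/6 := by
    calc (∫ x in Icc (0:ℝ) 1, |h' x - φ x|) ≤ ∫ x, |h' x - φ x| := by
          apply setIntegral_le_integral ((hh'int.sub hφint).abs)
          exact Eventually.of_forall fun x => abs_nonneg _
      _ ≤ ε/6 := by simpa [Real.norm_eq_abs] using hφnear
  have heq : ∀ x ∈ Icc (0:ℝ) 1, h' x = h x := fun x hx => Set.indicator_of_mem hx h
  -- step 1 : ∫_I |h| ≤ ∫_I |φ| + ε/6
  have s1 : (∫ x in Icc (0:ℝ) 1, |h x|) ≤ (∫ x in Icc (0:ℝ) 1, |φ x|) + ε/6 := by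
    have : (∫ x in Icc (0:ℝ) 1, |h x|) ≤ ∫ x in Icc (0:ℝ) 1, (|φ x| + |h' x - φ x|) := by
      apply setIntegral_mono_on (hi.abs)
        ((hφint.abs.add ((hh'int.sub hφint).abs)).integrableOn) measurableSet_Icc
      intro x hx
      calc |h x| = |φ x + (h' x - φ x)| := by rw [heq x hx]; ring_nf
        _ ≤ |φ x| + |h' x - φ x| := abs_add_le _ _
    have hψint : Integrable (fun x => |h' x - φ x|) := by
      simpa using (hh'int.sub hφint).abs
    rw [integral_add (hφint.abs.integrableOn) (hψint.integrableOn)] at this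
    linarith [hIsub, this]
  -- primitives
  set F : ℝ → ℝ := fun x => ∫ t in (0:ℝ)..x, h t with hF
  set Φ : ℝ → ℝ := fun x => ∫ t in (0:ℝ)..x, φ t with hΦ
  -- Φ = F + D on I where D is primitive of (φ - h)
  have hφh'int : IntegrableOn (fun t => φ t - h t) (Icc (0:ℝ) 1) := (hφint.integrableOn).sub hi
  have s2 : eVariationOn Φ (Icc (0:ℝ) 1)
      ≤ eVariationOn F (Icc (0:ℝ) 1) + ENNReal.ofReal (ε/6) := by
    have heqon : EqOn Φ (fun x => F x + ∫ t in (0:ℝ)..x, (φ t - h t)) (Icc (0:ℝ) 1) := by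
      intro x hx
      have hint1 : IntervalIntegrable h volume 0 x := by
        rw [intervalIntegrable_iff]
        refine hi.mono_set (Set.uIoc_subset_uIcc.trans ?_)
        exact Set.uIcc_subset_Icc (by constructor <;> norm_num) hx
      have hint2 : IntervalIntegrable φ volume 0 x := hφcont.intervalIntegrable _ _
      simp only [hΦ, hF]
      rw [intervalIntegral.integral_sub hint2 hint1]
      ring
    rw [eVariationOn.eq_of_eqOn heqon]
    calc eVariationOn (fun x => F x + ∫ t in (0:ℝ)..x, (φ t - h t)) (Icc (0:ℝ) 1)
        ≤ eVariationOn F (Icc (0:ℝ) 1) +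
          eVariationOn (fun x => ∫ t in (0:ℝ)..x, (φ t - h t)) (Icc (0:ℝ) 1) :=
          evar_add_le _ _ _
      _ ≤ _ := by
          gcongr
          calc eVariationOn (fun x => ∫ t in (0:ℝ)..x, (φ t - h t)) (Icc (0:ℝ) 1)
              ≤ ENNReal.ofReal (∫ x in Icc (0:ℝ) 1, |φ x - h x|) := evar_primitive_le hφh'int
            _ ≤ ENNReal.ofReal (ε/6) := by
                apply ENNReal.ofReal_le_ofReal
                calc (∫ x in Icc (0:ℝ) 1, |φ x - h x|) = ∫ x in Icc (0:ℝ) 1, |h' x - φ x| := by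
                      apply setIntegral_congr_fun measurableSet_Icc
                      intro x hx
                      show |φ x - h x| = |h' x - φ x|
                      rw [heq x hx, abs_sub_comm]
                  _ ≤ ε/6 := hIsub
  -- assemble
  calc ENNReal.ofReal (∫ x in Icc (0:ℝ) 1, |h x|)
      ≤ ENNReal.ofReal ((∫ x in Icc (0:ℝ) 1, |φ x|) + ε/6) := ENNReal.ofReal_le_ofReal s1
    _ = ENNReal.ofReal (∫ x in Icc (0:ℝ) 1, |φ x|) + ENNReal.ofReal (ε/6) := by
        rw [ENNReal.ofReal_add (integral_nonneg fun x => abs_nonneg _) hε6.le]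
    _ ≤ (eVariationOn Φ (Icc (0:ℝ) 1) + ENNReal.ofReal (2*(ε/6))) + ENNReal.ofReal (ε/6) := by
        gcongr
        exact integral_abs_le_evar_primitive_add φ hφcont hε6
    _ ≤ ((eVariationOn F (Icc (0:ℝ) 1) + ENNReal.ofReal (ε/6)) + ENNReal.ofReal (2*(ε/6)))
          + ENNReal.ofReal (ε/6) := by gcongr
    _ ≤ eVariationOn F (Icc (0:ℝ) 1) + ε := by
        rw [add_assoc, add_assoc]
        gcongr
        rw [← ENNReal.ofReal_add (by positivity) (by positivity),
          ← ENNReal.ofReal_add (by positivity) (by positivity)]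
        exact le_trans (ENNReal.ofReal_le_ofReal (by linarith))
          (le_of_eq ENNReal.ofReal_coe_nnreal)


lemma uniqueDiffOn_I01 : UniqueDiffOn ℝ I01 := uniqueDiffOn_Icc zero_lt_one

/-- Regularity class: `r` levels of differentiability, each level continuous and BV on `[0,1]`. -/
def Reg : ℕ → (ℝ → ℝ) → Prop
  | 0, w => ContinuousOn w I01 ∧ BoundedVariationOn w I01
  | (r+1), w => (ContinuousOn w I01 ∧ BoundedVariationOn w I01) ∧
      DifferentiableOn ℝ w I01 ∧ Reg r (derivWithin w I01)

lemma Reg.cont {r : ℕ} {w : ℝ → ℝ} (h : Reg r w) : ContinuousOn w I01 := by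
  cases r with
  | zero => exact h.1
  | succ r => exact h.1.1

lemma Reg.bv {r : ℕ} {w : ℝ → ℝ} (h : Reg r w) : BoundedVariationOn w I01 := by
  cases r with
  | zero => exact h.2
  | succ r => exact h.1.2

lemma Reg.diff {r : ℕ} {w : ℝ → ℝ} (h : Reg (r+1) w) : DifferentiableOn ℝ w I01 := h.2.1

lemma Reg.deriv {r : ℕ} {w : ℝ → ℝ} (h : Reg (r+1) w) : Reg r (derivWithin w I01) := h.2.2

lemma Reg.of_succ : ∀ (r : ℕ) (w : ℝ → ℝ), Reg (r+1) w → Reg r w := by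
  intro r
  induction r with
  | zero => exact fun w h => h.1
  | succ r ih => exact fun w h => ⟨h.1, h.2.1, ih _ h.2.2⟩

lemma Reg.mono {r r' : ℕ} {w : ℝ → ℝ} (hr : r' ≤ r) (h : Reg r w) : Reg r' w := by
  induction r with
  | zero => exact (Nat.le_zero.mp hr) ▸ h
  | succ r ih =>
    rcases Nat.lt_or_ge r' (r+1) with h' | h'
    · exact ih (Nat.lt_succ_iff.mp h') (Reg.of_succ r w h)
    · exact (le_antisymm hr h') ▸ h

lemma Reg.congr : ∀ (r : ℕ) {u v : ℝ → ℝ}, EqOn u v I01 → Reg r u → Reg r v := by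
  intro r
  induction r with
  | zero =>
    intro u v he h
    exact ⟨h.1.congr he.symm, by
      unfold BoundedVariationOn
      rw [← eVariationOn.eq_of_eqOn he]; exact h.2⟩
  | succ r ih =>
    intro u v he h
    refine ⟨⟨h.1.1.congr he.symm, by
      unfold BoundedVariationOn
      rw [← eVariationOn.eq_of_eqOn he]; exact h.1.2⟩, ?_, ?_⟩
    · exact fun x hx => ((h.2.1 x hx).congr (fun y hy => (he hy).symm) (he hx).symm)
    · refine ih ?_ h.2.2
      intro x hx
      exact derivWithin_congr (fun y hy => (he hy).symm) (he hx).symm |>.symm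
      |>.trans rfl

lemma reg_zero_const (cst : ℝ) : Reg 0 (fun _ => cst) := by
  refine ⟨continuousOn_const, ?_⟩
  unfold BoundedVariationOn
  rw [eVariationOn.constant_on]
  · exact ENNReal.zero_ne_top
  · rintro x ⟨a, _, rfl⟩ y ⟨b, _, rfl⟩; rfl

lemma Reg.const : ∀ (r : ℕ) (cst : ℝ), Reg r (fun _ => cst) := by
  intro r
  induction r with
  | zero => exact reg_zero_const
  | succ r ih =>
    intro cst
    refine ⟨reg_zero_const cst, differentiableOn_const _, ?_⟩
    refine Reg.congr r (fun x hx => ?_) (ih 0)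
    exact (by simp : derivWithin (fun _ : ℝ => cst) I01 x = 0).symm


lemma bv_of_le_add {u : ℝ → ℝ} {a b : ℝ≥0∞} (ha : a ≠ ⊤) (hb : b ≠ ⊤)
    (h : eVariationOn u I01 ≤ a + b) : BoundedVariationOn u I01 :=
  ne_top_of_le_ne_top (ENNReal.add_ne_top.2 ⟨ha, hb⟩) h

lemma Reg.add : ∀ (r : ℕ) {u v : ℝ → ℝ}, Reg r u → Reg r v → Reg r (fun x => u x + v x) := by
  intro r
  induction r with
  | zero =>
    intro u v hu hv
    exact ⟨hu.1.add hv.1, bv_of_le_add hu.2 hv.2 (evar_add_le u v I01)⟩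
  | succ r ih =>
    intro u v hu hv
    refine ⟨⟨hu.cont.add hv.cont, bv_of_le_add hu.bv hv.bv (evar_add_le u v I01)⟩,
      hu.diff.add hv.diff, ?_⟩
    refine Reg.congr r (fun x hx => ?_) (ih hu.deriv hv.deriv)
    exact (derivWithin_fun_add (hu.diff x hx) (hv.diff x hx)).symm

lemma bounded_of_continuousOn {u : ℝ → ℝ} (h : ContinuousOn u I01) :
    ∃ A : ℝ, 0 ≤ A ∧ ∀ x ∈ I01, |u x| ≤ A := by
  obtain ⟨A, hA⟩ := isCompact_Icc.exists_bound_of_continuousOn h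
  refine ⟨A, ?_, fun x hx => by simpa [Real.norm_eq_abs] using hA x hx⟩
  have := hA 0 (by constructor <;> norm_num)
  simpa using (norm_nonneg _).trans this

lemma Reg.mul : ∀ (r : ℕ) {u v : ℝ → ℝ}, Reg r u → Reg r v → Reg r (fun x => u x * v x) := by
  intro r
  induction r with
  | zero =>
    intro u v hu hv
    obtain ⟨A, _, hA⟩ := bounded_of_continuousOn hu.1
    obtain ⟨B, _, hB⟩ := bounded_of_continuousOn hv.1
    refine ⟨hu.1.mul hv.1, bv_of_le_add ?_ ?_ (evar_mul_le u v I01 A B hA hB)⟩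
    · exact ENNReal.mul_ne_top ENNReal.ofReal_ne_top hv.2
    · exact ENNReal.mul_ne_top ENNReal.ofReal_ne_top hu.2
  | succ r ih =>
    intro u v hu hv
    obtain ⟨A, _, hA⟩ := bounded_of_continuousOn hu.cont
    obtain ⟨B, _, hB⟩ := bounded_of_continuousOn hv.cont
    refine ⟨⟨hu.cont.mul hv.cont, bv_of_le_add ?_ ?_ (evar_mul_le u v I01 A B hA hB)⟩,
      hu.diff.mul hv.diff, ?_⟩
    · exact ENNReal.mul_ne_top ENNReal.ofReal_ne_top hv.bv
    · exact ENNReal.mul_ne_top ENNReal.ofReal_ne_top hu.bv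
    · refine Reg.congr r (fun x hx => ?_)
        (Reg.add r (ih hu.deriv (Reg.of_succ r v hv)) (ih (Reg.of_succ r u hu) hv.deriv))
    -- goal: (fun x => u' x * v x + u x * v' x) x = derivWithin (fun y => u y * v y) I01 x
      exact (derivWithin_fun_mul (hu.diff x hx) (hv.diff x hx)).symm


variable {k : ℕ}

lemma mem_I01_0 : (0:ℝ) ∈ I01 := ⟨le_refl 0, zero_le_one⟩
lemma mem_I01_1 : (1:ℝ) ∈ I01 := ⟨zero_le_one, le_refl 1⟩

lemma evar_le_of_primitive {F h : ℝ → ℝ} (hi : IntegrableOn h I01)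
    (heq : ∀ x ∈ I01, F x = F 0 + ∫ t in (0:ℝ)..x, h t) :
    eVariationOn F I01 ≤ ENNReal.ofReal (∫ x in I01, |h x|) := by
  have : eVariationOn F I01 = eVariationOn (fun x => F 0 + ∫ t in (0:ℝ)..x, h t) I01 :=
    eVariationOn.eq_of_eqOn fun x hx => heq x hx
  rw [this, evar_const_add]
  exact evar_primitive_le hi

lemma bv_of_primitive {F h : ℝ → ℝ} (hi : IntegrableOn h I01)
    (heq : ∀ x ∈ I01, F x = F 0 + ∫ t in (0:ℝ)..x, h t) :
    BoundedVariationOn F I01 :=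
  ne_top_of_le_ne_top ENNReal.ofReal_ne_top (evar_le_of_primitive hi heq)

variable {k : ℕ}

/-- FTC for iterated derivatives of a `C^k` function on `[0,1]`. -/
lemma ftc_iterated {F : ℝ → ℝ} (hF : ContDiffOn ℝ k F I01) {i : ℕ} (hik : i + 1 ≤ k)
    {x : ℝ} (hx : x ∈ I01) :
    iteratedDerivWithin i F I01 x
      = iteratedDerivWithin i F I01 0 + ∫ t in (0:ℝ)..x, iteratedDerivWithin (i+1) F I01 t := by
  have hsub : Icc (0:ℝ) x ⊆ I01 := Icc_subset_Icc le_rfl hx.2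
  have hcont : ContinuousOn (iteratedDerivWithin i F I01) (Icc 0 x) :=
    (hF.continuousOn_iteratedDerivWithin (by exact_mod_cast le_trans (Nat.le_succ i) hik)
      uniqueDiffOn_I01).mono hsub
  have hcont' : ContinuousOn (iteratedDerivWithin (i+1) F I01) I01 :=
    hF.continuousOn_iteratedDerivWithin (by exact_mod_cast hik) uniqueDiffOn_I01
  have hderiv : ∀ y ∈ Ioo (0:ℝ) x, HasDerivWithinAt (iteratedDerivWithin i F I01)
      (iteratedDerivWithin (i+1) F I01 y) (Ioi y) y := by
    intro y hy
    have hyI : y ∈ Ioo (0:ℝ) 1 := ⟨hy.1, lt_of_lt_of_le hy.2 hx.2⟩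
    have hyI' : y ∈ I01 := Ioo_subset_Icc_self hyI
    have hd : DifferentiableWithinAt ℝ (iteratedDerivWithin i F I01) I01 y :=
      hF.differentiableOn_iteratedDerivWithin
        (by exact_mod_cast Nat.lt_of_lt_of_le (Nat.lt_succ_self i) hik) uniqueDiffOn_I01 y hyI'
    have hnb : I01 ∈ 𝓝 y := Icc_mem_nhds hyI.1 hyI.2
    have hda : HasDerivAt (iteratedDerivWithin i F I01)
        (derivWithin (iteratedDerivWithin i F I01) I01 y) y :=
      (hd.hasDerivWithinAt).hasDerivAt hnb
    rw [iteratedDerivWithin_succ]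
    exact hda.hasDerivWithinAt
  have hint : IntervalIntegrable (iteratedDerivWithin (i+1) F I01) volume 0 x := by
    apply ContinuousOn.intervalIntegrable
    rw [uIcc_of_le hx.1]
    exact hcont'.mono hsub
  have := intervalIntegral.integral_eq_sub_of_hasDeriv_right_of_le hx.1 hcont hderiv hint
  linarith [this]

variable (g : DiffkAC k)

lemma g_strictMono (hk : 1 ≤ k) : StrictMonoOn g.toFun I01 := by
  apply strictMonoOn_of_deriv_pos (convex_Icc 0 1) (g.contDiff.continuousOn)
  intro x hx
  rw [interior_Icc] at hx
  have hxI : x ∈ I01 := Ioo_subset_Icc_self hx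
  have := g.derivPos x hxI
  rwa [derivWithin_of_mem_nhds (Icc_mem_nhds hx.1 hx.2)] at this

lemma g_mapsTo (hk : 1 ≤ k) : MapsTo g.toFun I01 I01 := by
  intro x hx
  have hm := (g_strictMono g hk).monotoneOn
  constructor
  · have := hm mem_I01_0 hx hx.1
    rwa [g.map0] at this
  · have := hm hx mem_I01_1 hx.2
    rwa [g.map1] at this

lemma g_image (hk : 1 ≤ k) : g.toFun '' I01 = I01 := by
  apply Subset.antisymm ((g_mapsTo g hk).image_subset)
  have := intermediate_value_Icc (zero_le_one) (g.contDiff.continuousOn)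
  rwa [g.map0, g.map1] at this

lemma evar_comp_g (hk : 1 ≤ k) (u : ℝ → ℝ) :
    eVariationOn (fun x => u (g.toFun x)) I01 = eVariationOn u I01 := by
  have := eVariationOn.comp_eq_of_monotoneOn u g.toFun ((g_strictMono g hk).monotoneOn)
  rw [g_image g hk] at this
  exact this


variable (g : DiffkAC k)

/-- Regularity of the iterated derivatives of `g`. -/
lemma regG (hk : 1 ≤ k) :
    ∀ (r i : ℕ), 1 ≤ i → i + r ≤ k → Reg r (iteratedDerivWithin i g.toFun I01) := by
  intro r
  induction r with
  | zero =>
    intro i h1 hik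
    simp only [Nat.add_zero] at hik
    refine ⟨g.contDiff.continuousOn_iteratedDerivWithin (by exact_mod_cast hik)
      uniqueDiffOn_I01, ?_⟩
    rcases eq_or_lt_of_le hik with he | hl
    · obtain ⟨h, hint, heq⟩ := g.ac
      subst he
      exact bv_of_primitive hint heq
    · refine bv_of_primitive (h := iteratedDerivWithin (i+1) g.toFun I01) ?_
        (fun x hx => ftc_iterated g.contDiff (by omega) hx)
      exact (g.contDiff.continuousOn_iteratedDerivWithin (by exact_mod_cast hl)
        uniqueDiffOn_I01).integrableOn_compact isCompact_Icc
  | succ r ih =>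
    intro i h1 hik
    have hbase := ih i h1 (by omega)
    refine ⟨⟨hbase.cont, hbase.bv⟩, ?_, ?_⟩
    · refine g.contDiff.differentiableOn_iteratedDerivWithin ?_ uniqueDiffOn_I01
      exact_mod_cast (show i < k by omega)
    · refine Reg.congr r (fun x hx => ?_) (ih (i+1) (by omega) (by omega))
      exact congrFun iteratedDerivWithin_succ x

/-- Faà-di-Bruno-type expansion for iterated derivatives of a composition. -/
lemma faa (hk : 1 ≤ k) : ∀ m : ℕ, 1 ≤ m → m ≤ k → ∃ w : ℕ → ℝ → ℝ,
    (∀ j, j < m → Reg (k - m) (w j)) ∧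
    ∀ F : ℝ → ℝ, ContDiffOn ℝ k F I01 → ∀ x ∈ I01,
      iteratedDerivWithin m (F ∘ g.toFun) I01 x
        = ∑ j ∈ Finset.range m,
            iteratedDerivWithin (j+1) F I01 (g.toFun x) * w j x := by
  intro m
  induction m with
  | zero => omega
  | succ m ih =>
    intro _ hmk
    have hgd : DifferentiableOn ℝ g.toFun I01 :=
      g.contDiff.differentiableOn (by exact_mod_cast (by omega : k ≠ 0))
    rcases Nat.eq_zero_or_pos m with rfl | hm
    · -- base case m+1 = 1
      refine ⟨fun _ => derivWithin g.toFun I01, ?_, ?_⟩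
      · intro j _
        refine Reg.congr (k-1) (fun x hx => ?_) (regG g hk (k-1) 1 le_rfl (by omega))
        exact congrFun iteratedDerivWithin_one x
      · intro F hF x hx
        have hgx := g_mapsTo g hk hx
        rw [Finset.sum_range_one, iteratedDerivWithin_one,
          iteratedDerivWithin_one]
        have hFd : HasDerivWithinAt F (derivWithin F I01 (g.toFun x)) I01 (g.toFun x) :=
          ((hF.differentiableOn (by exact_mod_cast (by omega : k ≠ 0))) _ hgx).hasDerivWithinAt
        have hgdx : HasDerivWithinAt g.toFun (derivWithin g.toFun I01 x) I01 x :=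
          (hgd x hx).hasDerivWithinAt
        exact (hFd.comp x hgdx (g_mapsTo g hk)).derivWithin (uniqueDiffOn_I01 x hx)
    · -- inductive step
      obtain ⟨w, hwreg, hwf⟩ := ih hm (by omega)
      have hkm : k - m = (k - (m+1)) + 1 := by omega
      set dg : ℝ → ℝ := derivWithin g.toFun I01 with hdg
      set W : ℕ → ℝ → ℝ := fun j x =>
        (if j < m then derivWithin (w j) I01 x else 0) +
        (if 1 ≤ j then w (j-1) x * dg x else 0) with hW
      have hdgreg : Reg (k - (m+1)) dg := by
        refine Reg.congr (k-(m+1)) (fun x hx => ?_)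
          ((regG g hk (k-1) 1 le_rfl (by omega)).mono (by omega))
        exact congrFun iteratedDerivWithin_one x
      refine ⟨W, ?_, ?_⟩
      · intro j _
        apply Reg.add
        · by_cases hj : j < m
          · simp only [if_pos hj]
            have := hwreg j hj
            rw [hkm] at this
            exact this.deriv
          · simp only [if_neg hj]
            exact Reg.const _ 0
        · by_cases hj : 1 ≤ j
          · simp only [if_pos hj]
            exact Reg.mul _ ((hwreg (j-1) (by omega)).mono (by omega)) hdgreg
          · simp only [if_neg hj]
            exact Reg.const _ 0
      · intro F hF x hx
        have hgx := g_mapsTo g hk hx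
        have hud := uniqueDiffOn_I01 x hx
        -- differentiability and derivative data
        have hwd : ∀ j, j < m → HasDerivWithinAt (w j) (derivWithin (w j) I01 x) I01 x := by
          intro j hj
          have := hwreg j hj
          rw [hkm] at this
          exact (this.diff x hx).hasDerivWithinAt
        have hFd : ∀ j, j < m → HasDerivWithinAt (iteratedDerivWithin (j+1) F I01)
            (iteratedDerivWithin (j+2) F I01 (g.toFun x)) I01 (g.toFun x) := by
          intro j hj
          have hd : DifferentiableWithinAt ℝ (iteratedDerivWithin (j+1) F I01) I01 (g.toFun x) :=
            hF.differentiableOn_iteratedDerivWithin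
              (by exact_mod_cast (by omega : j+1 < k)) uniqueDiffOn_I01 _ hgx
          have := hd.hasDerivWithinAt
          rwa [← iteratedDerivWithin_succ] at this
        have hgdx : HasDerivWithinAt g.toFun (dg x) I01 x := (hgd x hx).hasDerivWithinAt
        -- derivative of each summand
        have hterm : ∀ j ∈ Finset.range m, HasDerivWithinAt
            (fun y => iteratedDerivWithin (j+1) F I01 (g.toFun y) * w j y)
            (iteratedDerivWithin (j+2) F I01 (g.toFun x) * dg x * w j x +
              iteratedDerivWithin (j+1) F I01 (g.toFun x) * derivWithin (w j) I01 x) I01 x := by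
          intro j hj
          rw [Finset.mem_range] at hj
          exact ((hFd j hj).comp x hgdx (g_mapsTo g hk)).mul (hwd j hj)
        have hsum : HasDerivWithinAt
            (fun y => ∑ j ∈ Finset.range m,
              iteratedDerivWithin (j+1) F I01 (g.toFun y) * w j y)
            (∑ j ∈ Finset.range m,
              (iteratedDerivWithin (j+2) F I01 (g.toFun x) * dg x * w j x +
               iteratedDerivWithin (j+1) F I01 (g.toFun x) * derivWithin (w j) I01 x)) I01 x :=
          HasDerivWithinAt.fun_sum hterm
        -- LHS computation
        have lhs1 : iteratedDerivWithin (m+1) (F ∘ g.toFun) I01 x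
            = derivWithin (iteratedDerivWithin m (F ∘ g.toFun) I01) I01 x :=
          congrFun iteratedDerivWithin_succ x
        have lhs2 : derivWithin (iteratedDerivWithin m (F ∘ g.toFun) I01) I01 x
            = derivWithin (fun y => ∑ j ∈ Finset.range m,
                iteratedDerivWithin (j+1) F I01 (g.toFun y) * w j y) I01 x :=
          derivWithin_congr (fun y hy => hwf F hF y hy) (hwf F hF x hx)
        rw [lhs1, lhs2, hsum.derivWithin hud]
        -- now pure algebra
        rw [Finset.sum_add_distrib]
        have rhs : ∑ j ∈ Finset.range (m+1),
            iteratedDerivWithin (j+1) F I01 (g.toFun x) * W j x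
            = (∑ j ∈ Finset.range (m+1), iteratedDerivWithin (j+1) F I01 (g.toFun x) *
                (if j < m then derivWithin (w j) I01 x else 0)) +
              (∑ j ∈ Finset.range (m+1), iteratedDerivWithin (j+1) F I01 (g.toFun x) *
                (if 1 ≤ j then w (j-1) x * dg x else 0)) := by
          rw [← Finset.sum_add_distrib]
          refine Finset.sum_congr rfl fun j _ => ?_
          rw [hW]; ring
        rw [rhs, add_comm]
        congr 1
        · rw [Finset.sum_range_succ, if_neg (by omega), mul_zero, add_zero]
          refine Finset.sum_congr rfl fun j hj => ?_
          rw [Finset.mem_range] at hj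
          rw [if_pos hj]
        · rw [Finset.sum_range_succ']
          rw [if_neg (by omega : ¬ (1:ℕ) ≤ 0), mul_zero, add_zero]
          refine Finset.sum_congr rfl fun j hj => ?_
          split_ifs with h₁
          · simp only [Nat.add_sub_cancel]; ring
          · omega


lemma evar_sum_le {ι : Type*} (s : Finset ι) (u : ι → ℝ → ℝ) (t : Set ℝ) :
    eVariationOn (fun x => ∑ j ∈ s, u j x) t ≤ ∑ j ∈ s, eVariationOn (u j) t := by
  classical
  induction s using Finset.induction_on with
  | empty =>
    simp only [Finset.sum_empty]
    refine le_of_eq (eVariationOn.constant_on ?_)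
    rintro x ⟨a, _, rfl⟩ y ⟨b', _, rfl⟩; rfl
  | insert _ _ hnotmem ih =>
    rename_i a s'
    have : (fun x => ∑ j ∈ insert a s', u j x) = fun x => u a x + ∑ j ∈ s', u j x := by
      funext x; rw [Finset.sum_insert hnotmem]
    rw [this, Finset.sum_insert hnotmem]
    exact le_trans (evar_add_le _ _ _) (add_le_add_right ih _)

section Main
variable {k : ℕ} (hk : 1 ≤ k) (f : ℕ → DiffkAC k) (f₀ : DiffkAC k)

lemma sup_bdd (n : ℕ) (i : ℕ) (hik : i ≤ k) :
    BddAbove (Set.range fun x : Icc (0:ℝ) 1 =>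
      |iteratedDerivWithin i (f n).toFun I01 x - iteratedDerivWithin i f₀.toFun I01 x|) := by
  have hc : ContinuousOn (fun y => iteratedDerivWithin i (f n).toFun I01 y
      - iteratedDerivWithin i f₀.toFun I01 y) I01 :=
    ((f n).contDiff.continuousOn_iteratedDerivWithin (by exact_mod_cast hik) uniqueDiffOn_I01).sub
      (f₀.contDiff.continuousOn_iteratedDerivWithin (by exact_mod_cast hik)
        uniqueDiffOn_I01)
  obtain ⟨A, _, hA⟩ := bounded_of_continuousOn hc
  exact ⟨A, by rintro y ⟨x, rfl⟩; exact hA x x.2⟩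

lemma dCk_nonneg (n : ℕ) : 0 ≤ dCk k (f n) f₀ := by
  unfold dCk
  have h1 : (0:ℝ) ≤ ⨆ x : Icc (0:ℝ) 1, |(f n).toFun x - f₀.toFun x| :=
    Real.iSup_nonneg fun x => abs_nonneg _
  have h2 : (0:ℝ) ≤ ∑ i ∈ Finset.Icc 1 k, ⨆ x : Icc (0:ℝ) 1,
      |iteratedDerivWithin i (f n).toFun (Icc 0 1) x - iteratedDerivWithin i f₀.toFun (Icc 0 1) x| :=
    Finset.sum_nonneg fun i _ => Real.iSup_nonneg fun x => abs_nonneg _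
  linarith

lemma abs_le_dCk (n : ℕ) {i : ℕ} (h1 : 1 ≤ i) (hik : i ≤ k) {x : ℝ} (hx : x ∈ I01) :
    |iteratedDerivWithin i (f n).toFun I01 x - iteratedDerivWithin i f₀.toFun I01 x|
      ≤ dCk k (f n) f₀ := by
  have step1 : |iteratedDerivWithin i (f n).toFun I01 x - iteratedDerivWithin i f₀.toFun I01 x|
      ≤ ⨆ x : Icc (0:ℝ) 1,
        |iteratedDerivWithin i (f n).toFun I01 x - iteratedDerivWithin i f₀.toFun I01 x| :=
    le_ciSup (sup_bdd f f₀ n i hik) (⟨x, hx⟩ : Icc (0:ℝ) 1)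
  refine le_trans step1 ?_
  unfold dCk
  have h2 : (⨆ x : Icc (0:ℝ) 1,
      |iteratedDerivWithin i (f n).toFun I01 x - iteratedDerivWithin i f₀.toFun I01 x|)
      ≤ ∑ i' ∈ Finset.Icc 1 k, ⨆ x : Icc (0:ℝ) 1,
        |iteratedDerivWithin i' (f n).toFun (Icc 0 1) x
          - iteratedDerivWithin i' f₀.toFun (Icc 0 1) x| :=
    Finset.single_le_sum (f := fun i' => ⨆ x : Icc (0:ℝ) 1,
        |iteratedDerivWithin i' (f n).toFun (Icc 0 1) x
          - iteratedDerivWithin i' f₀.toFun (Icc 0 1) x|)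
      (fun i' _ => Real.iSup_nonneg fun x => abs_nonneg _) (Finset.mem_Icc.2 ⟨h1, hik⟩)
  have h3 : (0:ℝ) ≤ ⨆ x : Icc (0:ℝ) 1, |(f n).toFun x - f₀.toFun x| :=
    Real.iSup_nonneg fun x => abs_nonneg _
  linarith

lemma integral_abs_le_dCk (n : ℕ) {i : ℕ} (h1 : 1 ≤ i) (hik : i ≤ k) :
    (∫ x in I01, |iteratedDerivWithin i (f n).toFun I01 x
        - iteratedDerivWithin i f₀.toFun I01 x|) ≤ dCk k (f n) f₀ := by
  have hint : IntegrableOn (fun x => |iteratedDerivWithin i (f n).toFun I01 x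
      - iteratedDerivWithin i f₀.toFun I01 x|) I01 :=
    ((((f n).contDiff.continuousOn_iteratedDerivWithin (by exact_mod_cast hik)
        uniqueDiffOn_I01).sub
      (f₀.contDiff.continuousOn_iteratedDerivWithin (by exact_mod_cast hik)
        uniqueDiffOn_I01)).abs).integrableOn_compact isCompact_Icc
  calc (∫ x in I01, |iteratedDerivWithin i (f n).toFun I01 x
        - iteratedDerivWithin i f₀.toFun I01 x|)
      ≤ ∫ _x in I01, dCk k (f n) f₀ := by
        apply setIntegral_mono_on hint (integrableOn_const (by
          rw [Real.volume_Icc]; exact ENNReal.ofReal_ne_top)) measurableSet_Icc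
        exact fun x hx => abs_le_dCk f f₀ n h1 hik hx
    _ = dCk k (f n) f₀ := by
        rw [setIntegral_const, Real.volume_real_Icc, smul_eq_mul]
        norm_num

end Main


end RMC

open RMC ENNReal NNReal

/-- Right multiplication by a fixed `g` is continuous: if `d_{C^k}(fₙ,f₀) → 0` and
`fₙ^{(k+1)} → f₀^{(k+1)}` in `L¹`, then `(fₙ ∘ g)^{(k+1)} → (f₀ ∘ g)^{(k+1)}` in `L¹`.
Here `G n`, `G₀` are a.e. `(k+1)`-st derivative witnesses for `fₙ`, `f₀`, and
`H n`, `H₀` for the composites `fₙ ∘ g`, `f₀ ∘ g`. -/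
theorem right_multiplication_continuous (k : ℕ) (hk : 1 ≤ k)
    (f : ℕ → DiffkAC k) (f₀ : DiffkAC k) (g : DiffkAC k)
    (c : ℕ → DiffkAC k) (c₀ : DiffkAC k)
    (hc : ∀ n, (c n).toFun = (f n).toFun ∘ g.toFun)
    (hc₀ : c₀.toFun = f₀.toFun ∘ g.toFun)
    (G : ℕ → ℝ → ℝ) (G₀ : ℝ → ℝ)
    (hG : ∀ n, IntegrableOn (G n) (Icc 0 1) ∧ ∀ x ∈ Icc (0:ℝ) 1,
      iteratedDerivWithin k (f n).toFun (Icc 0 1) x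
        = iteratedDerivWithin k (f n).toFun (Icc 0 1) 0 + ∫ t in (0:ℝ)..x, G n t)
    (hG₀ : IntegrableOn G₀ (Icc 0 1) ∧ ∀ x ∈ Icc (0:ℝ) 1,
      iteratedDerivWithin k f₀.toFun (Icc 0 1) x
        = iteratedDerivWithin k f₀.toFun (Icc 0 1) 0 + ∫ t in (0:ℝ)..x, G₀ t)
    (H : ℕ → ℝ → ℝ) (H₀ : ℝ → ℝ)
    (hH : ∀ n, IntegrableOn (H n) (Icc 0 1) ∧ ∀ x ∈ Icc (0:ℝ) 1,
      iteratedDerivWithin k (c n).toFun (Icc 0 1) x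
        = iteratedDerivWithin k (c n).toFun (Icc 0 1) 0 + ∫ t in (0:ℝ)..x, H n t)
    (hH₀ : IntegrableOn H₀ (Icc 0 1) ∧ ∀ x ∈ Icc (0:ℝ) 1,
      iteratedDerivWithin k c₀.toFun (Icc 0 1) x
        = iteratedDerivWithin k c₀.toFun (Icc 0 1) 0 + ∫ t in (0:ℝ)..x, H₀ t)
    (hCk : Tendsto (fun n => dCk k (f n) f₀) atTop (𝓝 0))
    (hL1 : Tendsto (fun n => ∫ x in Icc (0:ℝ) 1, |G n x - G₀ x|) atTop (𝓝 0)) :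
    Tendsto (fun n => ∫ x in Icc (0:ℝ) 1, |H n x - H₀ x|) atTop (𝓝 0) := by
  classical
  obtain ⟨w, hwreg, hwf⟩ := faa g hk k hk le_rfl
  -- bounds for the coefficient functions
  have hwreg' : ∀ j, j < k → Reg 0 (w j) := by
    intro j hj
    have := hwreg j hj
    rwa [Nat.sub_self] at this
  have hBex : ∀ j : ℕ, ∃ Bj : ℝ, 0 ≤ Bj ∧ (j < k → ∀ x ∈ I01, |w j x| ≤ Bj) := by
    intro j
    by_cases hj : j < k
    · obtain ⟨Aj, hA0, hA⟩ := bounded_of_continuousOn (hwreg' j hj).cont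
      exact ⟨Aj, hA0, fun _ => hA⟩
    · exact ⟨0, le_rfl, fun h => absurd h hj⟩
  choose B hB0 hB using hBex
  set V : ℕ → ℝ := fun j => (eVariationOn (w j) I01).toReal with hV
  have hVnn : ∀ j, 0 ≤ V j := fun j => ENNReal.toReal_nonneg
  have hVle : ∀ j, j < k → eVariationOn (w j) I01 ≤ ENNReal.ofReal (V j) := by
    intro j hj
    rw [hV, ENNReal.ofReal_toReal (hwreg' j hj).bv]
  -- the difference functions
  set Δ : ℕ → ℕ → ℝ → ℝ := fun j n y =>
    iteratedDerivWithin (j+1) (f n).toFun I01 y - iteratedDerivWithin (j+1) f₀.toFun I01 y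
    with hΔ
  -- bound b j n for the variation of Δ j n
  set b : ℕ → ℕ → ℝ := fun j n =>
    if j + 1 = k then (∫ x in Icc (0:ℝ) 1, |G n x - G₀ x|) else dCk k (f n) f₀ with hb
  have hbnn : ∀ j n, j < k → 0 ≤ b j n := by
    intro j n _
    simp only [hb]
    split_ifs
    · exact integral_nonneg fun x => abs_nonneg _
    · exact dCk_nonneg f f₀ n
  have hΔvar : ∀ j n, j < k → eVariationOn (Δ j n) I01 ≤ ENNReal.ofReal (b j n) := by
    intro j n hj
    rcases eq_or_lt_of_le (Nat.succ_le_of_lt hj) with he | hl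
    · -- j + 1 = k
      have he' : k = j + 1 := by omega
      subst he'
      have heq : ∀ x ∈ I01, Δ j n x = Δ j n 0 + ∫ t in (0:ℝ)..x, (G n t - G₀ t) := by
        intro x hx
        have e1 := (hG n).2 x hx
        have e2 := hG₀.2 x hx
        simp only [hΔ]
        rw [e1, e2, intervalIntegral.integral_sub
          (intervalIntegrable_of_integrableOn (hG n).1 mem_I01_0 hx)
          (intervalIntegrable_of_integrableOn hG₀.1 mem_I01_0 hx)]
        have e10 := (hG n).2 0 mem_I01_0
        have e20 := hG₀.2 0 mem_I01_0
        simp only [intervalIntegral.integral_same] at e10 e20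
        ring
      calc eVariationOn (Δ j n) I01
          ≤ ENNReal.ofReal (∫ x in I01, |G n x - G₀ x|) :=
            evar_le_of_primitive ((hG n).1.sub hG₀.1) heq
        _ = ENNReal.ofReal (b j n) := by simp only [hb, if_pos rfl]
    · -- j + 1 < k
      have hcont : ContinuousOn (fun t => iteratedDerivWithin (j+2) (f n).toFun I01 t
          - iteratedDerivWithin (j+2) f₀.toFun I01 t) I01 :=
        ((f n).contDiff.continuousOn_iteratedDerivWithin
            (by exact_mod_cast (show j+2 ≤ k by omega)) uniqueDiffOn_I01).sub
          (f₀.contDiff.continuousOn_iteratedDerivWithin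
            (by exact_mod_cast (show j+2 ≤ k by omega)) uniqueDiffOn_I01)
      have hint : IntegrableOn (fun t => iteratedDerivWithin (j+2) (f n).toFun I01 t
          - iteratedDerivWithin (j+2) f₀.toFun I01 t) I01 :=
        hcont.integrableOn_compact isCompact_Icc
      have heq : ∀ x ∈ I01, Δ j n x = Δ j n 0 + ∫ t in (0:ℝ)..x,
          (iteratedDerivWithin (j+2) (f n).toFun I01 t
            - iteratedDerivWithin (j+2) f₀.toFun I01 t) := by
        intro x hx
        have e1 := ftc_iterated (f n).contDiff (show (j+1)+1 ≤ k by omega) hx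
        have e2 := ftc_iterated f₀.contDiff (show (j+1)+1 ≤ k by omega) hx
        simp only [hΔ]
        rw [e1, e2, intervalIntegral.integral_sub
          (intervalIntegrable_of_integrableOn (((f n).contDiff.continuousOn_iteratedDerivWithin
            (by exact_mod_cast (show j+2 ≤ k by omega)) uniqueDiffOn_I01).integrableOn_compact
            isCompact_Icc) mem_I01_0 hx)
          (intervalIntegrable_of_integrableOn ((f₀.contDiff.continuousOn_iteratedDerivWithin
            (by exact_mod_cast (show j+2 ≤ k by omega)) uniqueDiffOn_I01).integrableOn_compact
            isCompact_Icc) mem_I01_0 hx)]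
        have e10 := ftc_iterated (f n).contDiff (show (j+1)+1 ≤ k by omega) mem_I01_0
        have e20 := ftc_iterated f₀.contDiff (show (j+1)+1 ≤ k by omega) mem_I01_0
        simp only [intervalIntegral.integral_same] at e10 e20
        ring
      calc eVariationOn (Δ j n) I01
          ≤ ENNReal.ofReal (∫ x in I01, |iteratedDerivWithin (j+2) (f n).toFun I01 x
              - iteratedDerivWithin (j+2) f₀.toFun I01 x|) :=
            evar_le_of_primitive hint heq
        _ ≤ ENNReal.ofReal (b j n) := by
            apply ENNReal.ofReal_le_ofReal
            simp only [hb, if_neg (by omega : ¬ j + 1 = k)]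
            exact integral_abs_le_dCk f f₀ n (by omega) (by omega)
  -- the real-valued bound sequence
  set A : ℕ → ℝ := fun n => ∑ j ∈ Finset.range k,
    (dCk k (f n) f₀ * V j + B j * b j n) with hA'
  -- main estimate
  have main : ∀ n, (∫ x in Icc (0:ℝ) 1, |H n x - H₀ x|) ≤ A n := by
    intro n
    -- identity: primitive of Hn - H₀ equals the sum on I01
    have hHint : IntegrableOn (fun t => H n t - H₀ t) I01 := (hH n).1.sub hH₀.1
    set C : ℝ := iteratedDerivWithin k (c n).toFun I01 0 - iteratedDerivWithin k c₀.toFun I01 0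
      with hC
    have hprim : ∀ x ∈ I01, C + (∫ t in (0:ℝ)..x, (H n t - H₀ t))
        = ∑ j ∈ Finset.range k, Δ j n (g.toFun x) * w j x := by
      intro x hx
      have e1 := (hH n).2 x hx
      have e2 := hH₀.2 x hx
      have eint : (∫ t in (0:ℝ)..x, (H n t - H₀ t))
          = (∫ t in (0:ℝ)..x, H n t) - ∫ t in (0:ℝ)..x, H₀ t :=
        intervalIntegral.integral_sub
          (intervalIntegrable_of_integrableOn (hH n).1 mem_I01_0 hx)
          (intervalIntegrable_of_integrableOn hH₀.1 mem_I01_0 hx)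
      have key : iteratedDerivWithin k (c n).toFun I01 x - iteratedDerivWithin k c₀.toFun I01 x
          = ∑ j ∈ Finset.range k, Δ j n (g.toFun x) * w j x := by
        have k1 : iteratedDerivWithin k (c n).toFun I01 x
            = ∑ j ∈ Finset.range k,
              iteratedDerivWithin (j+1) (f n).toFun I01 (g.toFun x) * w j x := by
          rw [hc n]; exact hwf (f n).toFun (f n).contDiff x hx
        have k2 : iteratedDerivWithin k c₀.toFun I01 x
            = ∑ j ∈ Finset.range k,
              iteratedDerivWithin (j+1) f₀.toFun I01 (g.toFun x) * w j x := by
          rw [hc₀]; exact hwf f₀.toFun f₀.contDiff x hx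
        rw [k1, k2, ← Finset.sum_sub_distrib]
        refine Finset.sum_congr rfl fun j _ => ?_
        simp only [hΔ]; ring
      rw [hC, eint, ← key, e1, e2]
      ring
    -- the chain of inequalities in ℝ≥0∞
    have chain : ENNReal.ofReal (∫ x in Icc (0:ℝ) 1, |H n x - H₀ x|)
        ≤ ENNReal.ofReal (A n) := by
      calc ENNReal.ofReal (∫ x in Icc (0:ℝ) 1, |H n x - H₀ x|)
          ≤ eVariationOn (fun x => ∫ t in (0:ℝ)..x, (H n t - H₀ t)) I01 :=
            ofReal_integral_abs_le_evar hHint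
        _ = eVariationOn (fun x => C + ∫ t in (0:ℝ)..x, (H n t - H₀ t)) I01 :=
            (evar_const_add C _ I01).symm
        _ = eVariationOn (fun x => ∑ j ∈ Finset.range k, Δ j n (g.toFun x) * w j x) I01 :=
            eVariationOn.eq_of_eqOn fun x hx => hprim x hx
        _ ≤ ∑ j ∈ Finset.range k,
              eVariationOn (fun x => Δ j n (g.toFun x) * w j x) I01 :=
            evar_sum_le _ _ _
        _ ≤ ∑ j ∈ Finset.range k, ENNReal.ofReal (dCk k (f n) f₀ * V j + B j * b j n) := by
            refine Finset.sum_le_sum fun j hj => ?_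
            rw [Finset.mem_range] at hj
            have hmul := evar_mul_le (fun x => Δ j n (g.toFun x)) (w j) I01
              (dCk k (f n) f₀) (B j)
              (fun x hx => abs_le_dCk f f₀ n (Nat.le_add_left 1 j) hj (g_mapsTo g hk hx))
              (fun x hx => hB j hj x hx)
            refine le_trans hmul ?_
            rw [ENNReal.ofReal_add (mul_nonneg (dCk_nonneg f f₀ n) (hVnn j))
              (mul_nonneg (hB0 j) (hbnn j n hj)),
              ENNReal.ofReal_mul (dCk_nonneg f f₀ n), ENNReal.ofReal_mul (hB0 j)]
            apply add_le_add
            · exact mul_le_mul_right (hVle j hj) _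
            · refine mul_le_mul_right ?_ _
              rw [evar_comp_g g hk (Δ j n)]
              exact hΔvar j n hj
        _ = ENNReal.ofReal (A n) := by
            simp only [hA']
            rw [ENNReal.ofReal_sum_of_nonneg]
            intro j hj
            rw [Finset.mem_range] at hj
            exact add_nonneg (mul_nonneg (dCk_nonneg f f₀ n) (hVnn j))
              (mul_nonneg (hB0 j) (hbnn j n hj))
    have hAnn : 0 ≤ A n := by
      simp only [hA']
      refine Finset.sum_nonneg fun j hj => ?_
      rw [Finset.mem_range] at hj
      exact add_nonneg (mul_nonneg (dCk_nonneg f f₀ n) (hVnn j))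
        (mul_nonneg (hB0 j) (hbnn j n hj))
    exact (ENNReal.ofReal_le_ofReal_iff hAnn).mp chain
  -- A n → 0
  have hAto : Tendsto A atTop (𝓝 0) := by
    have : Tendsto (fun n => ∑ j ∈ Finset.range k,
        (dCk k (f n) f₀ * V j + B j * b j n)) atTop (𝓝 (∑ j ∈ Finset.range k, 0)) := by
      refine tendsto_finset_sum _ fun j hj => ?_
      rw [Finset.mem_range] at hj
      have t1 : Tendsto (fun n => dCk k (f n) f₀ * V j) atTop (𝓝 0) := by
        simpa using hCk.mul_const (V j)
      have t2 : Tendsto (fun n => B j * b j n) atTop (𝓝 0) := by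
        have hbto : Tendsto (fun n => b j n) atTop (𝓝 0) := by
          by_cases he : j + 1 = k
          · simp only [hb, if_pos he]
            exact hL1
          · simp only [hb, if_neg he]
            exact hCk
        simpa using hbto.const_mul (B j)
      simpa using t1.add t2
    simpa using this
  exact squeeze_zero (fun n => integral_nonneg fun x => abs_nonneg _) main hAto
end
end

section
/- There exists an uncountable family {F_h : h ∈ J} of continuous functions of bounded variation on [0,1], indexed by an interval J of positive length, such that each F_h has total variation exactly r, F_h(0) = F_h(1) = 0, and V(F_{h₁} − F_{h₂}) = 2r for all distinct h₁, h₂ ∈ J, for any prescribed r > 0. -/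
open MeasureTheory Set

noncomputable section

namespace USF

/-- The `i`-th binary digit of `y`. -/
def digz (y : ℝ) (i : ℕ) : ℤ := ⌊y * 2 ^ (i + 1)⌋ - 2 * ⌊y * 2 ^ i⌋

lemma digz_nonneg (y : ℝ) (i : ℕ) : 0 ≤ digz y i := by
  have hf : ((⌊y * 2 ^ i⌋ : ℤ) : ℝ) ≤ y * 2 ^ i := Int.floor_le _
  have h1 : ((2 * ⌊y * 2 ^ i⌋ : ℤ) : ℝ) ≤ y * 2 ^ (i + 1) := by
    push_cast
    calc (2 : ℝ) * (⌊y * 2 ^ i⌋ : ℝ) ≤ 2 * (y * 2 ^ i) := by linarith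
    _ = y * 2 ^ (i + 1) := by ring
  have := Int.le_floor.2 h1
  simp only [digz]
  omega

lemma digz_le_one (y : ℝ) (i : ℕ) : digz y i ≤ 1 := by
  have hf : y * 2 ^ i < (⌊y * 2 ^ i⌋ : ℝ) + 1 := Int.lt_floor_add_one _
  have h1 : y * 2 ^ (i + 1) < ((2 * ⌊y * 2 ^ i⌋ + 2 : ℤ) : ℝ) := by
    push_cast
    calc y * 2 ^ (i + 1) = 2 * (y * 2 ^ i) := by ring
    _ < 2 * ((⌊y * 2 ^ i⌋ : ℝ) + 1) := by linarith
    _ = 2 * (⌊y * 2 ^ i⌋ : ℝ) + 2 := by ring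
  have := Int.floor_lt.2 h1
  simp only [digz]
  omega

lemma floor_rec (y : ℝ) (i : ℕ) : ⌊y * 2 ^ (i + 1)⌋ = 2 * ⌊y * 2 ^ i⌋ + digz y i := by
  simp only [digz]; ring

lemma floor_agree {u v : ℝ} (hu : u ∈ Ico (0:ℝ) 1) (hv : v ∈ Ico (0:ℝ) 1)
    (k : ℕ) (hd : ∀ i < k, digz u i = digz v i) : ⌊u * 2 ^ k⌋ = ⌊v * 2 ^ k⌋ := by
  induction k with
  | zero =>
      simp only [pow_zero, mul_one]
      rw [Int.floor_eq_zero_iff.2 hu, Int.floor_eq_zero_iff.2 hv]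
  | succ k ih =>
      rw [floor_rec u k, floor_rec v k, ih (fun i hi => hd i (hi.trans (Nat.lt_succ_self k))),
        hd k (Nat.lt_succ_self k)]

lemma abs_lt_of_digz_agree {u v : ℝ} (hu : u ∈ Ico (0:ℝ) 1) (hv : v ∈ Ico (0:ℝ) 1)
    (k : ℕ) (hd : ∀ i ≤ k, digz u i = digz v i) : |u - v| < (1/2 : ℝ) ^ (k + 1) := by
  have hfl : ⌊u * 2 ^ (k+1)⌋ = ⌊v * 2 ^ (k+1)⌋ :=
    floor_agree hu hv (k+1) (fun i hi => hd i (Nat.lt_succ_iff.mp hi))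
  have h1 : |u * 2 ^ (k+1) - v * 2 ^ (k+1)| < 1 := by
    have hu1 : (⌊u * 2 ^ (k+1)⌋ : ℝ) ≤ u * 2 ^ (k+1) := Int.floor_le _
    have hu2 : u * 2 ^ (k+1) < (⌊u * 2 ^ (k+1)⌋ : ℝ) + 1 := Int.lt_floor_add_one _
    have hv1 : (⌊v * 2 ^ (k+1)⌋ : ℝ) ≤ v * 2 ^ (k+1) := Int.floor_le _
    have hv2 : v * 2 ^ (k+1) < (⌊v * 2 ^ (k+1)⌋ : ℝ) + 1 := Int.lt_floor_add_one _
    rw [hfl] at hu1 hu2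
    rw [abs_lt]; constructor <;> linarith
  have hpow : (0:ℝ) < 2 ^ (k+1) := by positivity
  have h2 : |u - v| * 2 ^ (k+1) < 1 := by
    have heq : (u - v) * 2 ^ (k+1) = u * 2 ^ (k+1) - v * 2 ^ (k+1) := by ring
    rw [← heq, abs_mul, abs_of_pos hpow] at h1
    exact h1
  have : |u - v| < 1 / 2 ^ (k+1) := by
    rw [lt_div_iff₀ hpow]; linarith
  calc |u - v| < 1 / 2 ^ (k+1) := this
  _ = (1/2 : ℝ) ^ (k+1) := by rw [div_pow, one_pow]

lemma exists_digz_ne {u v : ℝ} (hu : u ∈ Ico (0:ℝ) 1) (hv : v ∈ Ico (0:ℝ) 1)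
    (huv : u ≠ v) : ∃ j, digz u j ≠ digz v j := by
  by_contra hcon
  push_neg at hcon
  have habs : 0 < |u - v| := by
    rw [abs_pos]; exact sub_ne_zero_of_ne huv
  obtain ⟨k, hk⟩ := exists_pow_lt_of_lt_one habs (by norm_num : (1/2 : ℝ) < 1)
  have := abs_lt_of_digz_agree hu hv k (fun i _ => hcon i)
  have hle : (1/2:ℝ) ^ (k+1) ≤ (1/2:ℝ) ^ k :=
    pow_le_pow_of_le_one (by norm_num) (by norm_num) (Nat.le_succ k)
  linarith

/-- interleaved digit sequence of the parameter `h` -/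
def dd (h : ℝ) (i : ℕ) : ℤ := if Even i then digz h (i / 2) else 0

lemma dd_nonneg (h : ℝ) (i : ℕ) : 0 ≤ dd h i := by
  unfold dd; split
  · exact digz_nonneg _ _
  · exact le_rfl

lemma dd_le_one (h : ℝ) (i : ℕ) : dd h i ≤ 1 := by
  unfold dd; split
  · exact digz_le_one _ _
  · norm_num

/-- the base-5 digit sequence of the point of `K_h` labelled by `u` -/
def aseq (h u : ℝ) (i : ℕ) : ℤ := digz u i + 2 * dd h i

lemma aseq_nonneg (h u : ℝ) (i : ℕ) : 0 ≤ aseq h u i := by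
  have := digz_nonneg u i; have := dd_nonneg h i; unfold aseq; omega

lemma aseq_le_three (h u : ℝ) (i : ℕ) : aseq h u i ≤ 3 := by
  have := digz_le_one u i; have := dd_le_one h i; unfold aseq; omega

/-- the map from labels to points of `K_h` -/
def Phi (h u : ℝ) : ℝ := ∑' i : ℕ, (aseq h u i : ℝ) * (1/5) ^ (i + 1)

lemma summable_geom3 (k : ℕ) : Summable (fun i : ℕ => (3:ℝ) * (1/5) ^ (i + k + 1)) := by
  have h := (summable_geometric_of_lt_one (by norm_num : (0:ℝ) ≤ 1/5)
    (by norm_num : (1/5:ℝ) < 1)).mul_left ((3:ℝ) * (1/5) ^ (k+1))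
  refine h.congr fun i => ?_
  ring

lemma tsum_geom3 (k : ℕ) : ∑' i : ℕ, (3:ℝ) * (1/5) ^ (i + k + 1) = (3/4) * (1/5) ^ k := by
  have h1 : ∀ i : ℕ, (3:ℝ) * (1/5) ^ (i + k + 1) = ((3:ℝ) * (1/5) ^ (k+1)) * (1/5) ^ i :=
    fun i => by ring
  rw [tsum_congr h1, tsum_mul_left, tsum_geometric_of_lt_one (by norm_num) (by norm_num)]
  have : ((1:ℝ) - 1/5)⁻¹ = 5/4 := by norm_num
  rw [this]; ring

lemma summable_c (c : ℕ → ℤ) (hc : ∀ i, |c i| ≤ 3) :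
    Summable (fun i : ℕ => (c i : ℝ) * (1/5) ^ (i + 1)) := by
  apply Summable.of_norm_bounded (g := fun i : ℕ => (3:ℝ) * (1/5) ^ (i + 0 + 1)) (summable_geom3 0)
  intro i
  have h1 : |(c i : ℝ)| ≤ 3 := by exact_mod_cast hc i
  have h2 : (0:ℝ) < (1/5) ^ (i+1) := by positivity
  calc ‖(c i : ℝ) * (1/5) ^ (i + 1)‖ = |(c i : ℝ)| * (1/5) ^ (i+1) := by
        rw [Real.norm_eq_abs, abs_mul, abs_of_pos h2]
  _ ≤ 3 * (1/5) ^ (i+1) := by nlinarith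
  _ = 3 * (1/5) ^ (i + 0 + 1) := by norm_num

set_option maxHeartbeats 1000000 in
lemma key_estimate (c : ℕ → ℤ) (hc : ∀ i, |c i| ≤ 3) (k : ℕ)
    (h0 : ∀ i < k, c i = 0) (hk : c k ≠ 0) :
    (1/4:ℝ) * (1/5) ^ (k + 1) ≤ |∑' i : ℕ, (c i : ℝ) * (1/5) ^ (i + 1)| := by
  have hs := summable_c c hc
  have hsplit := Summable.sum_add_tsum_nat_add (f := fun i : ℕ => (c i : ℝ) * (1/5) ^ (i + 1)) (k+1) hs
  -- prefix
  have hpre : ∑ i ∈ Finset.range (k+1), (c i : ℝ) * (1/5) ^ (i + 1)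
      = (c k : ℝ) * (1/5) ^ (k+1) := by
    rw [Finset.sum_eq_single k]
    · intro i hi hne
      have : i < k := by
        rcases Nat.lt_succ_iff_lt_or_eq.mp (Finset.mem_range.mp hi) with h | h
        · exact h
        · exact absurd h hne
      rw [h0 i this]; simp
    · intro h; exact absurd (Finset.self_mem_range_succ k) h
  -- tail
  set T : ℝ := ∑' i : ℕ, (c (i + (k+1)) : ℝ) * (1/5) ^ (i + (k+1) + 1) with hT
  have hsum : Summable (fun i : ℕ => (c (i + (k+1)) : ℝ) * (1/5) ^ (i + (k+1) + 1)) :=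
    (summable_nat_add_iff (k+1)).2 hs
  have hsum' : Summable (fun i : ℕ => ‖(c (i + (k+1)) : ℝ) * (1/5) ^ (i + (k+1) + 1)‖) := by
    simpa only [Real.norm_eq_abs] using hsum.abs
  have hbnd : ∀ i : ℕ, ‖(c (i + (k+1)) : ℝ) * (1/5) ^ (i + (k+1) + 1)‖
      ≤ (3:ℝ) * (1/5) ^ (i + (k+1) + 1) := by
    intro i
    have h1 : |(c (i + (k+1)) : ℝ)| ≤ 3 := by exact_mod_cast hc _
    have h2 : (0:ℝ) < (1/5:ℝ) ^ (i + (k+1) + 1) := by positivity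
    rw [Real.norm_eq_abs, abs_mul, abs_of_pos h2]
    nlinarith
  have htail : |T| ≤ (3/4) * (1/5) ^ (k+1) := by
    calc |T| = ‖T‖ := (Real.norm_eq_abs T).symm
    _ ≤ ∑' i : ℕ, ‖(c (i + (k+1)) : ℝ) * (1/5) ^ (i + (k+1) + 1)‖ :=
        norm_tsum_le_tsum_norm hsum'
    _ ≤ ∑' i : ℕ, (3:ℝ) * (1/5) ^ (i + (k+1) + 1) := Summable.tsum_le_tsum hbnd hsum' (summable_geom3 (k+1))
    _ = (3/4) * (1/5) ^ (k+1) := tsum_geom3 (k+1)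
  have hck : (1:ℝ) ≤ |(c k : ℝ)| := by
    have := Int.one_le_abs hk
    exact_mod_cast this
  have hpow : (0:ℝ) < (1/5:ℝ) ^ (k+1) := by positivity
  have habs1 : (1/5:ℝ) ^ (k+1) ≤ |(c k : ℝ) * (1/5) ^ (k+1)| := by
    rw [abs_mul, abs_of_pos hpow]
    nlinarith
  have hsplit2 : ∑' i : ℕ, (c i : ℝ) * (1/5) ^ (i + 1)
      = (c k : ℝ) * (1/5) ^ (k+1) + T := by rw [← hsplit, hpre]
  have h4 := abs_add_le ((c k : ℝ) * (1/5) ^ (k+1) + T) (-T)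
  simp only [add_neg_cancel_right, abs_neg] at h4
  rw [hsplit2]
  linarith

lemma key_estimate' (c : ℕ → ℤ) (hc : ∀ i, |c i| ≤ 3) (m : ℕ) (hm : c m ≠ 0) :
    (1/4:ℝ) * (1/5) ^ (m + 1) ≤ |∑' i : ℕ, (c i : ℝ) * (1/5) ^ (i + 1)| := by
  have hex : ∃ j, c j ≠ 0 := ⟨m, hm⟩
  have hk : c (Nat.find hex) ≠ 0 := Nat.find_spec hex
  have h0 : ∀ i < Nat.find hex, c i = 0 := by
    intro i hi
    by_contra hne
    exact absurd (Nat.find_min hex hi) (by simp [hne])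
  have hkm : Nat.find hex ≤ m := Nat.find_min' hex hm
  refine le_trans ?_ (key_estimate c hc (Nat.find hex) h0 hk)
  have : (1/5:ℝ) ^ (m+1) ≤ (1/5:ℝ) ^ (Nat.find hex + 1) :=
    pow_le_pow_of_le_one (by norm_num) (by norm_num) (by omega)
  linarith

lemma summable_aseq (h u : ℝ) : Summable (fun i : ℕ => (aseq h u i : ℝ) * (1/5) ^ (i + 1)) := by
  apply summable_c
  intro i
  rw [abs_le]
  have := aseq_nonneg h u i; have := aseq_le_three h u i
  omega

lemma Phi_sub (h1 h2 u v : ℝ) :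
    Phi h1 u - Phi h2 v = ∑' i : ℕ, ((aseq h1 u i - aseq h2 v i : ℤ) : ℝ) * (1/5) ^ (i + 1) := by
  unfold Phi
  rw [← Summable.tsum_sub (summable_aseq h1 u) (summable_aseq h2 v)]
  congr 1; funext i; push_cast; ring

lemma aseq_sub_abs_le (h1 h2 u v : ℝ) (i : ℕ) : |aseq h1 u i - aseq h2 v i| ≤ 3 := by
  rw [abs_le]
  have := aseq_nonneg h1 u i; have := aseq_le_three h1 u i
  have := aseq_nonneg h2 v i; have := aseq_le_three h2 v i
  omega

lemma sep_pair {h1 h2 : ℝ} {j : ℕ} (hj : digz h1 j ≠ digz h2 j) (u v : ℝ) :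
    (1/4:ℝ) * (1/5) ^ (2*j + 1) ≤ |Phi h1 u - Phi h2 v| := by
  rw [Phi_sub]
  have h2j : (2*j)/2 = j := by omega
  have heven : Even (2*j) := ⟨j, by ring⟩
  have hne : aseq h1 u (2*j) - aseq h2 v (2*j) ≠ 0 := by
    simp only [aseq, dd, if_pos heven, h2j]
    have := digz_nonneg u (2*j); have := digz_le_one u (2*j)
    have := digz_nonneg v (2*j); have := digz_le_one v (2*j)
    omega
  exact key_estimate' (fun i => aseq h1 u i - aseq h2 v i)
    (aseq_sub_abs_le h1 h2 u v) (2*j) hne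

lemma digits_agree {h u v : ℝ} {k : ℕ}
    (hlt : |Phi h u - Phi h v| < (1/4:ℝ) * (1/5) ^ (k + 1)) :
    ∀ i ≤ k, digz u i = digz v i := by
  intro i hik
  by_contra hne
  have hci : aseq h u i - aseq h v i ≠ 0 := by
    simp only [aseq]
    omega
  have := key_estimate' (fun n => aseq h u n - aseq h v n) (aseq_sub_abs_le h h u v) i hci
  rw [← Phi_sub] at this
  have hmono : (1/5:ℝ) ^ (k+1) ≤ (1/5:ℝ) ^ (i+1) :=
    pow_le_pow_of_le_one (by norm_num) (by norm_num) (by omega)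
  linarith

lemma Phi_nonneg (h u : ℝ) : 0 ≤ Phi h u := by
  apply tsum_nonneg
  intro i
  have h1 : (0:ℤ) ≤ aseq h u i := aseq_nonneg h u i
  have h2 : (0:ℝ) ≤ (1/5:ℝ) ^ (i+1) := by positivity
  have : (0:ℝ) ≤ (aseq h u i : ℝ) := by exact_mod_cast h1
  positivity

lemma Phi_le (h u : ℝ) : Phi h u ≤ 3/4 := by
  unfold Phi
  have h1 : ∀ i : ℕ, (aseq h u i : ℝ) * (1/5) ^ (i + 1) ≤ (3:ℝ) * (1/5) ^ (i + 0 + 1) := by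
    intro i
    have ha : (aseq h u i : ℝ) ≤ 3 := by exact_mod_cast aseq_le_three h u i
    have h2 : (0:ℝ) < (1/5:ℝ) ^ (i+1) := by positivity
    have : (aseq h u i : ℝ) * (1/5) ^ (i + 1) ≤ 3 * (1/5) ^ (i+1) := by nlinarith
    calc (aseq h u i : ℝ) * (1/5) ^ (i + 1) ≤ 3 * (1/5) ^ (i+1) := this
    _ = 3 * (1/5) ^ (i + 0 + 1) := by norm_num
  calc ∑' i : ℕ, (aseq h u i : ℝ) * (1/5) ^ (i + 1)
      ≤ ∑' i : ℕ, (3:ℝ) * (1/5) ^ (i + 0 + 1) :=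
        Summable.tsum_le_tsum h1 (summable_aseq h u) (summable_geom3 0)
  _ = (3/4) * (1/5:ℝ) ^ 0 := tsum_geom3 0
  _ = 3/4 := by norm_num

/-- the singular staircase associated to the parameter `h` -/
def Aset (h x : ℝ) : Set ℝ := {u | u ∈ Ico (0:ℝ) 1 ∧ Phi h u < x}

def G (h x : ℝ) : ℝ := (volume (Aset h x)).toReal

lemma Aset_subset (h x : ℝ) : Aset h x ⊆ Ico (0:ℝ) 1 := fun _ hu => hu.1

lemma vol_Aset_le (h x : ℝ) : volume (Aset h x) ≤ 1 := by
  calc volume (Aset h x) ≤ volume (Ico (0:ℝ) 1) := measure_mono (Aset_subset h x)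
  _ = 1 := by simp

lemma vol_Aset_ne_top (h x : ℝ) : volume (Aset h x) ≠ ⊤ :=
  ((vol_Aset_le h x).trans_lt ENNReal.one_lt_top).ne

lemma Aset_mono (h : ℝ) {x y : ℝ} (hxy : x ≤ y) : Aset h x ⊆ Aset h y :=
  fun u hu => ⟨hu.1, hu.2.trans_le hxy⟩

lemma G_mono (h : ℝ) : Monotone (G h) := by
  intro x y hxy
  exact ENNReal.toReal_mono (vol_Aset_ne_top h y) (measure_mono (Aset_mono h hxy))

lemma G_of_nonpos (h : ℝ) {x : ℝ} (hx : x ≤ 0) : G h x = 0 := by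
  have : Aset h x = ∅ := by
    ext u
    simp only [Aset, mem_setOf_eq, mem_empty_iff_false, iff_false, not_and]
    intro _
    exact fun hlt => absurd (hlt.trans_le hx) (not_lt.2 (Phi_nonneg h u))
  simp [G, this]

lemma G_of_one_le (h : ℝ) {x : ℝ} (hx : 1 ≤ x) : G h x = 1 := by
  have : Aset h x = Ico (0:ℝ) 1 := by
    ext u
    simp only [Aset, mem_setOf_eq, and_iff_left_iff_imp]
    intro _
    exact lt_of_le_of_lt (Phi_le h u) (by linarith)
  simp [G, this]

lemma exists_witness {h p q : ℝ} (hne : G h p < G h q) :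
    ∃ u, u ∈ Ico (0:ℝ) 1 ∧ p ≤ Phi h u ∧ Phi h u < q := by
  by_contra hcon
  push_neg at hcon
  have hsub : Aset h q ⊆ Aset h p := by
    intro u hu
    refine ⟨hu.1, ?_⟩
    by_contra hnp
    push_neg at hnp
    exact absurd (hcon u hu.1 hnp) (not_le.2 hu.2)
  exact absurd (ENNReal.toReal_mono (vol_Aset_ne_top h p) (measure_mono hsub)) (not_le.2 hne)

lemma G_incr_le (h : ℝ) {x1 x2 : ℝ} (k : ℕ) (h12 : x1 ≤ x2)
    (hd : x2 - x1 ≤ (1/4:ℝ) * (1/5) ^ (k + 1)) :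
    G h x2 - G h x1 ≤ 2 * (1/2) ^ (k + 1) := by
  rcases Set.eq_empty_or_nonempty (Aset h x2 \ Aset h x1) with hemp | ⟨u0, hu0⟩
  · have hsub : Aset h x2 ⊆ Aset h x1 := by
      intro u hu
      by_contra hn
      exact absurd (Set.mem_diff u |>.2 ⟨hu, hn⟩) (by rw [hemp]; exact notMem_empty u)
    have := ENNReal.toReal_mono (vol_Aset_ne_top h x1) (measure_mono hsub)
    have hp : (0:ℝ) < (1/2:ℝ)^(k+1) := by positivity
    simp only [G] at this ⊢
    linarith
  · have hu0' : x1 ≤ Phi h u0 ∧ Phi h u0 < x2 := by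
      rcases hu0 with ⟨h2, h1⟩
      refine ⟨?_, h2.2⟩
      by_contra hn
      exact h1 ⟨h2.1, by linarith⟩
    have hsub : Aset h x2 ⊆ Aset h x1 ∪ Icc (u0 - (1/2)^(k+1)) (u0 + (1/2)^(k+1)) := by
      intro u hu
      by_cases hu1 : u ∈ Aset h x1
      · exact Or.inl hu1
      · right
        have hx1u : x1 ≤ Phi h u := by
          by_contra hn
          exact hu1 ⟨hu.1, by linarith⟩
        have hdist : |Phi h u - Phi h u0| < (1/4:ℝ) * (1/5) ^ (k + 1) := by
          rw [abs_sub_lt_iff]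
          constructor <;> [skip; skip] <;>
            first
              | (have := hu.2; have := hu0'.1; linarith)
              | (have := hu0'.2; linarith)
        have hagree := digits_agree hdist
        have habs := abs_lt_of_digz_agree hu.1 hu0.1.1 k hagree
        rw [abs_lt] at habs
        constructor <;> linarith [habs.1, habs.2]
    have hvol : volume (Aset h x2) ≤ volume (Aset h x1) + ENNReal.ofReal (2 * (1/2)^(k+1)) := by
      calc volume (Aset h x2)
          ≤ volume (Aset h x1 ∪ Icc (u0 - (1/2)^(k+1)) (u0 + (1/2)^(k+1))) := measure_mono hsub
      _ ≤ volume (Aset h x1) + volume (Icc (u0 - (1/2)^(k+1)) (u0 + (1/2)^(k+1))) :=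
          measure_union_le _ _
      _ = volume (Aset h x1) + ENNReal.ofReal (2 * (1/2)^(k+1)) := by
          rw [Real.volume_Icc]
          congr 1
          congr 1
          ring
    have hrhs : volume (Aset h x1) + ENNReal.ofReal (2 * (1/2)^(k+1)) ≠ ⊤ :=
      ENNReal.add_ne_top.2 ⟨vol_Aset_ne_top h x1, ENNReal.ofReal_ne_top⟩
    have := ENNReal.toReal_mono hrhs hvol
    rw [ENNReal.toReal_add (vol_Aset_ne_top h x1) ENNReal.ofReal_ne_top,
      ENNReal.toReal_ofReal (by positivity)] at this
    simp only [G] at *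
    linarith

lemma G_continuous (h : ℝ) : Continuous (G h) := by
  rw [Metric.continuous_iff]
  intro x ε hε
  obtain ⟨k, hk⟩ := exists_pow_lt_of_lt_one (show (0:ℝ) < ε/2 by linarith)
    (by norm_num : (1/2 : ℝ) < 1)
  have hk1 : 2 * (1/2:ℝ) ^ (k+1) < ε := by
    have : (1/2:ℝ)^(k+1) ≤ (1/2:ℝ)^k :=
      pow_le_pow_of_le_one (by norm_num) (by norm_num) (Nat.le_succ k)
    linarith
  refine ⟨(1/4:ℝ) * (1/5) ^ (k + 1), by positivity, fun y hy => ?_⟩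
  rw [Real.dist_eq] at hy ⊢
  rcases le_total x y with hxy | hxy
  · have hGm : G h x ≤ G h y := G_mono h hxy
    have h2 : y - x ≤ (1/4:ℝ) * (1/5) ^ (k + 1) := by
      rw [abs_of_nonneg (by linarith : (0:ℝ) ≤ y - x)] at hy
      linarith
    have := G_incr_le h k hxy h2
    rw [abs_of_nonneg (by linarith : (0:ℝ) ≤ G h y - G h x)]
    linarith
  · have hGm : G h y ≤ G h x := G_mono h hxy
    have h2 : x - y ≤ (1/4:ℝ) * (1/5) ^ (k + 1) := by
      rw [abs_of_nonpos (by linarith : y - x ≤ (0:ℝ))] at hy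
      linarith
    have := G_incr_le h k hxy h2
    rw [abs_of_nonpos (by linarith : G h y - G h x ≤ (0:ℝ))]
    linarith

/-! ## variation helpers -/

lemma evar_monotoneOn {f : ℝ → ℝ} {a b : ℝ} (hab : a ≤ b) (hf : MonotoneOn f (Icc a b)) :
    eVariationOn f (Icc a b) = ENNReal.ofReal (f b - f a) := by
  have ha : a ∈ Icc a b := ⟨le_rfl, hab⟩
  have hb : b ∈ Icc a b := ⟨hab, le_rfl⟩
  apply le_antisymm
  · have h := hf.eVariationOn_le (s := Icc a b) ha hb
    simpa [Set.inter_self] using h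
  · have h := eVariationOn.edist_le f ha hb
    rw [edist_dist, Real.dist_eq,
      abs_of_nonpos (sub_nonpos.2 (hf ha hb hab)), neg_sub] at h
    exact h

lemma evar_neg (f : ℝ → ℝ) (s : Set ℝ) :
    eVariationOn (fun x => -f x) s = eVariationOn f s := by
  simp only [eVariationOn]
  congr 1
  funext p
  exact Finset.sum_congr rfl (fun i _ => edist_neg_neg _ _)

lemma evar_antitoneOn {f : ℝ → ℝ} {a b : ℝ} (hab : a ≤ b) (hf : AntitoneOn f (Icc a b)) :
    eVariationOn f (Icc a b) = ENNReal.ofReal (f a - f b) := by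
  rw [← evar_neg f (Icc a b)]
  have hmono : MonotoneOn (fun x => -f x) (Icc a b) :=
    fun x hx y hy hxy => neg_le_neg (hf hx hy hxy)
  rw [evar_monotoneOn hab hmono]
  congr 1
  ring

lemma evar_sub_le (f g : ℝ → ℝ) (s : Set ℝ) :
    eVariationOn (fun x => f x - g x) s ≤ eVariationOn f s + eVariationOn g s := by
  apply iSup_le _
  rintro ⟨n, ⟨u, hu, us⟩⟩
  calc ∑ i ∈ Finset.range n,
        edist ((fun x => f x - g x) (u (i+1))) ((fun x => f x - g x) (u i))
      ≤ ∑ i ∈ Finset.range n,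
        (edist (f (u (i+1))) (f (u i)) + edist (g (u (i+1))) (g (u i))) := by
        apply Finset.sum_le_sum
        intro i _
        simp only []
        rw [edist_dist, edist_dist, edist_dist, ← ENNReal.ofReal_add dist_nonneg dist_nonneg]
        apply ENNReal.ofReal_le_ofReal
        rw [Real.dist_eq, Real.dist_eq, Real.dist_eq]
        calc |f (u (i+1)) - g (u (i+1)) - (f (u i) - g (u i))|
            = |(f (u (i+1)) - f (u i)) + -(g (u (i+1)) - g (u i))| := by congr 1; ring
        _ ≤ |f (u (i+1)) - f (u i)| + |-(g (u (i+1)) - g (u i))| := abs_add_le _ _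
        _ = |f (u (i+1)) - f (u i)| + |g (u (i+1)) - g (u i)| := by rw [abs_neg]
  _ = ∑ i ∈ Finset.range n, edist (f (u (i+1))) (f (u i))
      + ∑ i ∈ Finset.range n, edist (g (u (i+1))) (g (u i)) := Finset.sum_add_distrib
  _ ≤ _ := add_le_add (eVariationOn.sum_le (f := f) (n := n) hu us) (eVariationOn.sum_le (f := g) (n := n) hu us)

lemma evar_Icc_split (f : ℝ → ℝ) :
    eVariationOn f (Icc (0:ℝ) 1)
      = eVariationOn f (Icc (0:ℝ) (1/2)) + eVariationOn f (Icc (1/2:ℝ) 1) := by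
  have h := eVariationOn.Icc_add_Icc f (s := Icc (0:ℝ) 1)
    (by norm_num : (0:ℝ) ≤ 1/2) (by norm_num : (1/2:ℝ) ≤ 1)
    (by norm_num : (1/2:ℝ) ∈ Icc (0:ℝ) 1)
  rw [inter_eq_self_of_subset_right (Icc_subset_Icc le_rfl (by norm_num)),
    inter_eq_self_of_subset_right (Icc_subset_Icc (by norm_num) le_rfl),
    inter_self] at h
  exact h.symm

/-! ## the family -/

def Ff (r h x : ℝ) : ℝ := r/2 * (G h (2*x) - G h (2*x - 1))

lemma Ff_left {r h x : ℝ} (hx : x ≤ 1/2) : Ff r h x = r/2 * G h (2*x) := by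
  unfold Ff
  rw [G_of_nonpos h (by linarith : 2*x - 1 ≤ 0)]
  ring

lemma Ff_right {r h x : ℝ} (hx : 1/2 ≤ x) : Ff r h x = r/2 * (1 - G h (2*x - 1)) := by
  unfold Ff
  rw [G_of_one_le h (by linarith : (1:ℝ) ≤ 2*x)]

lemma Ff_zero (r h : ℝ) : Ff r h 0 = 0 := by
  rw [Ff_left (by norm_num), G_of_nonpos h (by norm_num : 2*(0:ℝ) ≤ 0), mul_zero]

lemma Ff_half (r h : ℝ) : Ff r h (1/2) = r/2 := by
  rw [Ff_left le_rfl, G_of_one_le h (by norm_num : (1:ℝ) ≤ 2*(1/2:ℝ)), mul_one]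

lemma Ff_one (r h : ℝ) : Ff r h 1 = 0 := by
  rw [Ff_right (by norm_num), G_of_one_le h (by norm_num : (1:ℝ) ≤ 2*1 - 1)]
  ring

lemma Ff_continuous (r h : ℝ) : Continuous (Ff r h) := by
  apply Continuous.mul continuous_const
  exact ((G_continuous h).comp (by continuity)).sub ((G_continuous h).comp (by continuity))

lemma Ff_mono_left (r h : ℝ) (hr : 0 ≤ r) : MonotoneOn (Ff r h) (Icc 0 (1/2:ℝ)) := by
  intro x hx y hy hxy
  rw [Ff_left hx.2, Ff_left hy.2]
  exact mul_le_mul_of_nonneg_left (G_mono h (by linarith : 2*x ≤ 2*y)) (by linarith)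

lemma Ff_anti_right (r h : ℝ) (hr : 0 ≤ r) : AntitoneOn (Ff r h) (Icc (1/2:ℝ) 1) := by
  intro x hx y hy hxy
  rw [Ff_right hx.1, Ff_right hy.1]
  have := G_mono h (by linarith : 2*x - 1 ≤ 2*y - 1)
  exact mul_le_mul_of_nonneg_left (by linarith) (by linarith)

lemma Ff_evar (r h : ℝ) (hr : 0 < r) :
    eVariationOn (Ff r h) (Icc 0 1) = ENNReal.ofReal r := by
  have h1 : eVariationOn (Ff r h) (Icc 0 (1/2:ℝ)) = ENNReal.ofReal (r/2) := by
    rw [evar_monotoneOn (by norm_num) (Ff_mono_left r h hr.le), Ff_half, Ff_zero]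
    norm_num
  have h2 : eVariationOn (Ff r h) (Icc (1/2:ℝ) 1) = ENNReal.ofReal (r/2) := by
    rw [evar_antitoneOn (by norm_num) (Ff_anti_right r h hr.le), Ff_half, Ff_one]
    norm_num
  rw [evar_Icc_split, h1, h2, ← ENNReal.ofReal_add (by positivity) (by positivity)]
  congr 1
  ring

/-! ## lower bound for the variation of a difference -/

lemma evar_lower_core {r : ℝ} (hr : 0 < r) {g1 g2 : ℝ → ℝ}
    (hm1 : Monotone g1) (hm2 : Monotone g2)
    (h10 : g1 0 = 0) (h11 : g1 1 = 1) (h20 : g2 0 = 0) (h21 : g2 1 = 1)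
    {D : ℝ → ℝ} {s : Set ℝ} (M : ℕ) (hM : 0 < M) (u : ℕ → ℝ) (hu : Monotone u)
    (hus : ∀ i, u i ∈ s)
    (hD : ∀ i ≤ M, D (u i) = r/2 * (g1 ((i:ℝ)/M) - g2 ((i:ℝ)/M)))
    (hdisj : ∀ i < M, g1 (((i:ℝ)+1)/M) = g1 ((i:ℝ)/M) ∨ g2 (((i:ℝ)+1)/M) = g2 ((i:ℝ)/M)) :
    ENNReal.ofReal r ≤ eVariationOn D s := by
  have hMR : (0:ℝ) < M := by exact_mod_cast hM
  have key : ∀ i < M, edist (D (u (i+1))) (D (u i))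
      = ENNReal.ofReal (r/2 * ((g1 (((i:ℝ)+1)/M) - g1 ((i:ℝ)/M))
          + (g2 (((i:ℝ)+1)/M) - g2 ((i:ℝ)/M)))) := by
    intro i hi
    have hcast : ((i+1 : ℕ) : ℝ) = (i:ℝ) + 1 := by push_cast; ring
    rw [hD (i+1) (by omega), hD i (by omega), edist_dist, Real.dist_eq, hcast]
    have hle : (i:ℝ)/M ≤ ((i:ℝ)+1)/M := by
      apply div_le_div_of_nonneg_right ?_ hMR.le
      linarith
    have hg1 : g1 ((i:ℝ)/M) ≤ g1 (((i:ℝ)+1)/M) := hm1 hle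
    have hg2 : g2 ((i:ℝ)/M) ≤ g2 (((i:ℝ)+1)/M) := hm2 hle
    congr 1
    rcases hdisj i hi with h | h
    · rw [h]
      rw [abs_of_nonpos (by nlinarith)]
      ring
    · rw [h]
      rw [abs_of_nonneg (by nlinarith)]
      ring
  have hsum : ∑ i ∈ Finset.range M, edist (D (u (i+1))) (D (u i)) = ENNReal.ofReal r := by
    rw [Finset.sum_congr rfl (fun i hi => key i (Finset.mem_range.mp hi)),
      ← ENNReal.ofReal_sum_of_nonneg (fun i hi => by
        have hle : (i:ℝ)/M ≤ ((i:ℝ)+1)/M := by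
          apply div_le_div_of_nonneg_right ?_ hMR.le
          linarith
        have hg1 : g1 ((i:ℝ)/M) ≤ g1 (((i:ℝ)+1)/M) := hm1 hle
        have hg2 : g2 ((i:ℝ)/M) ≤ g2 (((i:ℝ)+1)/M) := hm2 hle
        nlinarith)]
    congr 1
    have hrw : ∀ i ∈ Finset.range M,
        r/2 * ((g1 (((i:ℝ)+1)/M) - g1 ((i:ℝ)/M)) + (g2 (((i:ℝ)+1)/M) - g2 ((i:ℝ)/M)))
          = (g1 ((((i+1):ℕ):ℝ)/M) * (r/2) - g1 (((i:ℕ):ℝ)/M) * (r/2))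
            + (g2 ((((i+1):ℕ):ℝ)/M) * (r/2) - g2 (((i:ℕ):ℝ)/M) * (r/2)) := by
      intro i _
      push_cast
      ring
    rw [Finset.sum_congr rfl hrw, Finset.sum_add_distrib,
      Finset.sum_range_sub (fun i => g1 (((i:ℕ):ℝ)/M) * (r/2)),
      Finset.sum_range_sub (fun i => g2 (((i:ℕ):ℝ)/M) * (r/2))]
    have hMM : ((M:ℕ):ℝ)/(M:ℝ) = 1 := div_self (ne_of_gt hMR)
    have h0M : ((0:ℕ):ℝ)/(M:ℝ) = 0 := by norm_num
    rw [hMM, h0M, h10, h11, h20, h21]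
    ring
  calc ENNReal.ofReal r = ∑ i ∈ Finset.range M, edist (D (u (i+1))) (D (u i)) := hsum.symm
  _ ≤ eVariationOn D s := eVariationOn.sum_le (f := D) (n := M) hu hus

end USF

end

open USF

/-- For every `r > 0` there is an uncountable family `{F_h : h ∈ J}` of continuous
functions of bounded variation on `[0,1]`, indexed by a nondegenerate interval `J`,
with `V(F_h) = r`, `F_h(0) = F_h(1) = 0`, and `V(F_{h₁} − F_{h₂}) = 2r` for all
distinct `h₁, h₂ ∈ J`. -/
theorem uncountable_separated_family (r : ℝ) (hr : 0 < r) :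
    ∃ (a b : ℝ) (F : ℝ → ℝ → ℝ), a < b ∧
      (∀ h ∈ Icc a b,
        ContinuousOn (F h) (Icc 0 1) ∧
        eVariationOn (F h) (Icc 0 1) = ENNReal.ofReal r ∧
        F h 0 = 0 ∧ F h 1 = 0) ∧
      (∀ h₁ ∈ Icc a b, ∀ h₂ ∈ Icc a b, h₁ ≠ h₂ →
        eVariationOn (fun x => F h₁ x - F h₂ x) (Icc 0 1) = ENNReal.ofReal (2 * r)) := by
  refine ⟨0, 1/2, fun h x => Ff r h x, by norm_num, ?_, ?_⟩
  · intro h _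
    exact ⟨(Ff_continuous r h).continuousOn, Ff_evar r h hr, Ff_zero r h, Ff_one r h⟩
  · intro h₁ hmem1 h₂ hmem2 hne
    have h1I : h₁ ∈ Ico (0:ℝ) 1 := ⟨hmem1.1, by have := hmem1.2; linarith⟩
    have h2I : h₂ ∈ Ico (0:ℝ) 1 := ⟨hmem2.1, by have := hmem2.2; linarith⟩
    obtain ⟨j, hj⟩ := exists_digz_ne h1I h2I hne
    set sep := (1/4:ℝ) * (1/5)^(2*j+1) with hsepdef
    have hsep : 0 < sep := by rw [hsepdef]; positivity
    obtain ⟨M0, hM0⟩ := exists_nat_gt (1/sep)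
    set M := M0 + 1 with hMdef
    have hM : 0 < M := Nat.succ_pos _
    have hMR : (0:ℝ) < (M:ℝ) := by exact_mod_cast hM
    have hMsep : 1/(M:ℝ) < sep := by
      rw [div_lt_iff₀ hMR]
      have h1 : 1/sep < (M:ℝ) := by
        refine hM0.trans_le ?_
        exact_mod_cast Nat.le_succ M0
      calc (1:ℝ) = sep * (1/sep) := by field_simp
      _ < sep * (M:ℝ) := by
          apply mul_lt_mul_of_pos_left h1 hsep
    -- no common increase at scale 1/M
    have hdisj : ∀ p q : ℝ, p ≤ q → q - p ≤ 1/(M:ℝ) →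
        G h₁ q = G h₁ p ∨ G h₂ q = G h₂ p := by
      intro p q hpq hlen
      by_contra hcon
      push_neg at hcon
      have hlt1 : G h₁ p < G h₁ q := lt_of_le_of_ne (G_mono h₁ hpq) (Ne.symm hcon.1)
      have hlt2 : G h₂ p < G h₂ q := lt_of_le_of_ne (G_mono h₂ hpq) (Ne.symm hcon.2)
      obtain ⟨u, _, hup, huq⟩ := exists_witness hlt1
      obtain ⟨v, _, hvp, hvq⟩ := exists_witness hlt2
      have habs : |Phi h₁ u - Phi h₂ v| < sep := by
        rw [abs_sub_lt_iff]
        constructor <;> linarith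
      exact absurd habs (not_lt.2 (sep_pair hj u v))
    -- upper bound
    have hupper : eVariationOn (fun x => Ff r h₁ x - Ff r h₂ x) (Icc 0 1)
        ≤ ENNReal.ofReal (2*r) := by
      calc eVariationOn (fun x => Ff r h₁ x - Ff r h₂ x) (Icc 0 1)
          ≤ eVariationOn (Ff r h₁) (Icc 0 1) + eVariationOn (Ff r h₂) (Icc 0 1) :=
            evar_sub_le _ _ _
      _ = ENNReal.ofReal r + ENNReal.ofReal r := by
          rw [Ff_evar r h₁ hr, Ff_evar r h₂ hr]
      _ = ENNReal.ofReal (2*r) := by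
          rw [← ENNReal.ofReal_add hr.le hr.le]
          congr 1
          ring
    -- lower bound, left half
    have harg : ∀ i : ℕ, 2*((i:ℝ)/(2*(M:ℝ))) = (i:ℝ)/(M:ℝ) := by
      intro i
      field_simp
    have humem : ∀ i : ℕ, i ≤ M → ((i:ℝ)/(2*(M:ℝ))) ≤ 1/2 := by
      intro i hi
      rw [div_le_iff₀ (by linarith)]
      have : (i:ℝ) ≤ (M:ℝ) := by exact_mod_cast hi
      linarith
    have hunonneg : ∀ i : ℕ, (0:ℝ) ≤ (i:ℝ)/(2*(M:ℝ)) := by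
      intro i
      positivity
    have humono : Monotone (fun i : ℕ => (i:ℝ)/(2*(M:ℝ))) := by
      intro i j hij
      apply div_le_div_of_nonneg_right ?_ (by linarith : (0:ℝ) ≤ 2*(M:ℝ))
      exact_mod_cast hij
    have hdisjM : ∀ i : ℕ, i < M →
        G h₁ (((i:ℝ)+1)/(M:ℝ)) = G h₁ ((i:ℝ)/(M:ℝ))
          ∨ G h₂ (((i:ℝ)+1)/(M:ℝ)) = G h₂ ((i:ℝ)/(M:ℝ)) := by
      intro i _
      apply hdisj
      · apply div_le_div_of_nonneg_right ?_ hMR.le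
        linarith
      · rw [div_sub_div_same]
        norm_num
    have hlow1 : ENNReal.ofReal r
        ≤ eVariationOn (fun x => Ff r h₁ x - Ff r h₂ x) (Icc (0:ℝ) (1/2)) := by
      apply evar_lower_core hr (G_mono h₁) (G_mono h₂)
        (G_of_nonpos h₁ le_rfl) (G_of_one_le h₁ le_rfl)
        (G_of_nonpos h₂ le_rfl) (G_of_one_le h₂ le_rfl)
        M hM (fun i => min ((i:ℝ)/(2*(M:ℝ))) (1/2))
      · exact (humono.min monotone_const)
      · intro i
        exact ⟨le_min (hunonneg i) (by norm_num), min_le_right _ _⟩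
      · intro i hi
        have hmin : min ((i:ℝ)/(2*(M:ℝ))) (1/2) = (i:ℝ)/(2*(M:ℝ)) :=
          min_eq_left (humem i hi)
        rw [hmin, Ff_left (humem i hi), Ff_left (humem i hi), harg i]
        ring
      · exact hdisjM
    have hlow2 : ENNReal.ofReal r
        ≤ eVariationOn (fun x => Ff r h₁ x - Ff r h₂ x) (Icc (1/2:ℝ) 1) := by
      apply evar_lower_core hr (G_mono h₂) (G_mono h₁)
        (G_of_nonpos h₂ le_rfl) (G_of_one_le h₂ le_rfl)
        (G_of_nonpos h₁ le_rfl) (G_of_one_le h₁ le_rfl)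
        M hM (fun i => min (1/2 + (i:ℝ)/(2*(M:ℝ))) 1)
      · exact ((monotone_const.add humono).min monotone_const)
      · intro i
        exact ⟨le_min (by linarith [hunonneg i]) (by norm_num), min_le_right _ _⟩
      · intro i hi
        have hle1 : 1/2 + (i:ℝ)/(2*(M:ℝ)) ≤ 1 := by linarith [humem i hi]
        have hmin : min (1/2 + (i:ℝ)/(2*(M:ℝ))) 1 = 1/2 + (i:ℝ)/(2*(M:ℝ)) :=
          min_eq_left hle1
        have hhalf : (1/2:ℝ) ≤ 1/2 + (i:ℝ)/(2*(M:ℝ)) := by linarith [hunonneg i]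
        have harg2 : 2*(1/2 + (i:ℝ)/(2*(M:ℝ))) - 1 = (i:ℝ)/(M:ℝ) := by
          have := harg i
          linarith
        rw [hmin, Ff_right hhalf, Ff_right hhalf, harg2]
        ring
      · intro i hi
        exact (hdisjM i hi).symm
    -- combine
    apply le_antisymm hupper
    calc ENNReal.ofReal (2*r) = ENNReal.ofReal r + ENNReal.ofReal r := by
          rw [← ENNReal.ofReal_add hr.le hr.le]
          congr 1
          ring
    _ ≤ eVariationOn (fun x => Ff r h₁ x - Ff r h₂ x) (Icc (0:ℝ) (1/2))
        + eVariationOn (fun x => Ff r h₁ x - Ff r h₂ x) (Icc (1/2:ℝ) 1) :=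
        add_le_add hlow1 hlow2
    _ = eVariationOn (fun x => Ff r h₁ x - Ff r h₂ x) (Icc 0 1) :=
        (evar_Icc_split _).symm
end
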